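/- arXiv:1609.06272 — 5 statements merged into one kernel-verified Lean document; each statement's English description precedes it below -/
import Mathlib

section
/- Let H be a complex Hilbert space, let χ and η be bounded self-adjoint operators on H with 0 ≤ χ ≤ 1 and 0 ≤ η, and let q ∈ [1, 2]. Then (χ η χ)^q ≤ χ η^q χ in the Loewner order. -/
open scoped NNReal ENNReal
open Filter Polynomial Topology

namespace HansenAux

variable {A : Type*} [CStarAlgebra A] [Nontrivial A] [PartialOrder A] [StarOrderedRing A]

noncomputable def rp (a : A) (r : ℝ) : A := cfc (fun x : ℝ => x ^ r) a

lemma rpow_cont {r : ℝ} (hr : 0 ≤ r) : Continuous (fun x : ℝ => x ^ r) :=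
  continuous_iff_continuousAt.2 fun x => Real.continuousAt_rpow_const x r (Or.inr hr)

lemma rp_nonneg {a : A} (ha : 0 ≤ a) (r : ℝ) : 0 ≤ rp a r :=
  cfc_nonneg fun x hx => Real.rpow_nonneg (spectrum_nonneg_of_nonneg ha hx) r

lemma rp_sa {a : A} (ha : 0 ≤ a) (r : ℝ) : IsSelfAdjoint (rp a r) :=
  IsSelfAdjoint.of_nonneg (rp_nonneg ha r)

lemma rp_mul {a : A} (ha : 0 ≤ a) {r s : ℝ} (hr : 0 ≤ r) (hs : 0 ≤ s) (hrs : r + s ≠ 0) :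
    rp a r * rp a s = rp a (r + s) := by
  rw [rp, rp, rp, ← cfc_mul _ _ a ((rpow_cont hr).continuousOn) ((rpow_cont hs).continuousOn)]
  exact cfc_congr fun x hx => (Real.rpow_add' (spectrum_nonneg_of_nonneg ha hx) hrs).symm

lemma rp_one {a : A} (ha : 0 ≤ a) : rp a 1 = a := by
  rw [rp]
  have : cfc (fun x : ℝ => x ^ (1:ℝ)) a = cfc (id : ℝ → ℝ) a :=
    cfc_congr fun x _ => Real.rpow_one x
  rw [this, cfc_id ℝ a]

lemma rp_zero (a : A) (ha : IsSelfAdjoint a) : rp a 0 = 1 := by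
  rw [rp]
  have : cfc (fun x : ℝ => x ^ (0:ℝ)) a = cfc (fun _ : ℝ => (1:ℝ)) a :=
    cfc_congr fun x _ => Real.rpow_zero x
  rw [this, cfc_const_one ℝ a ha]

lemma pow_swap (b : A) (n : ℕ) : (star b * b) ^ n * star b = star b * (b * star b) ^ n := by
  induction n with
  | zero => simp
  | succ n ih => simp only [pow_succ, ← mul_assoc, ih]

lemma aeval_swap (b : A) (p : ℝ[X]) :
    aeval (star b * b) p * star b = star b * aeval (b * star b) p := by
  induction p using Polynomial.induction_on' with
  | add p q hp hq => simp only [map_add, add_mul, mul_add, hp, hq]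
  | monomial n c =>
      simp only [Polynomial.aeval_monomial, mul_assoc, Algebra.commutes c]
      rw [← mul_assoc, ← mul_assoc, pow_swap, mul_assoc]

lemma exists_poly (M : ℝ) (f : ℝ → ℝ) (hf : Continuous f) {ε : ℝ} (hε : 0 < ε) :
    ∃ p : ℝ[X], ∀ x ∈ Set.Icc (-M) M, |f x - p.eval x| ≤ ε := by
  set I : Set ℝ := Set.Icc (-M) M
  let f' : C(I, ℝ) := ⟨fun x => f x, hf.comp continuous_subtype_val⟩
  have hmem : f' ∈ closure (polynomialFunctions I : Set C(I, ℝ)) := by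
    rw [← Subalgebra.topologicalClosure_coe, polynomialFunctions_closure_eq_top (-M) M]
    trivial
  obtain ⟨g, hg, hdist⟩ := Metric.mem_closure_iff.mp hmem ε hε
  rw [SetLike.mem_coe, polynomialFunctions] at hg
  obtain ⟨p, -, rfl⟩ := hg
  refine ⟨p, fun x hx => ?_⟩
  have h1 : dist (f' ⟨x, hx⟩) ((Polynomial.toContinuousMapOnAlgHom I p) ⟨x, hx⟩) ≤ dist f' _ :=
    ContinuousMap.dist_apply_le_dist _
  have h2 := h1.trans hdist.le
  simpa [f', Real.dist_eq, Polynomial.toContinuousMapOnAlgHom_apply,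
    Polynomial.toContinuousMapOn, Polynomial.toContinuousMap] using h2

lemma cfc_swap (f : ℝ → ℝ) (hf : Continuous f) (b : A) :
    cfc f (star b * b) * star b = star b * cfc f (b * star b) := by
  have hs : IsSelfAdjoint (star b * b) := IsSelfAdjoint.star_mul_self b
  have ht : IsSelfAdjoint (b * star b) := by
    simpa using IsSelfAdjoint.star_mul_self (star b)
  set M := max ‖star b * b‖ ‖b * star b‖ with hM
  have hspec_s : spectrum ℝ (star b * b) ⊆ Set.Icc (-M) M := by
    intro x hx
    have h1 : |x| ≤ ‖star b * b‖ := by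
      simpa [Real.norm_eq_abs] using spectrum.norm_le_norm_of_mem hx
    have := h1.trans (le_max_left _ ‖b * star b‖)
    exact Set.mem_Icc.mpr (abs_le.mp this)
  have hspec_t : spectrum ℝ (b * star b) ⊆ Set.Icc (-M) M := by
    intro x hx
    have h1 : |x| ≤ ‖b * star b‖ := by
      simpa [Real.norm_eq_abs] using spectrum.norm_le_norm_of_mem hx
    have := h1.trans (le_max_right ‖star b * b‖ _)
    exact Set.mem_Icc.mpr (abs_le.mp this)
  rw [← sub_eq_zero, ← norm_le_zero_iff]
  refine le_of_forall_pos_le_add fun ε hε => ?_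
  rw [zero_add]
  have hε' : 0 < ε / (2 * (‖b‖ + 1)) := by positivity
  obtain ⟨p, hp⟩ := exists_poly M f hf hε'
  set ε' := ε / (2 * (‖b‖ + 1))
  have hkey : cfc f (star b * b) * star b - star b * cfc f (b * star b)
      = (cfc f (star b * b) - cfc p.eval (star b * b)) * star b
        + star b * (cfc p.eval (b * star b) - cfc f (b * star b)) := by
    have hmid : cfc p.eval (star b * b) * star b = star b * cfc p.eval (b * star b) := by
      rw [cfc_polynomial p (star b * b) hs, cfc_polynomial p (b * star b) ht, aeval_swap]
    rw [sub_mul, mul_sub, hmid]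
    abel
  have hns : ‖cfc f (star b * b) - cfc p.eval (star b * b)‖ ≤ ε' := by
    rw [← cfc_sub _ _ _ hf.continuousOn (Polynomial.continuous p).continuousOn]
    exact norm_cfc_le hε'.le fun x hx => by
      simpa [Real.norm_eq_abs] using hp x (hspec_s hx)
  have hnt : ‖cfc p.eval (b * star b) - cfc f (b * star b)‖ ≤ ε' := by
    rw [← cfc_sub _ _ _ (Polynomial.continuous p).continuousOn hf.continuousOn]
    refine norm_cfc_le hε'.le fun x hx => ?_
    rw [Real.norm_eq_abs, abs_sub_comm]
    exact hp x (hspec_t hx)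
  calc ‖cfc f (star b * b) * star b - star b * cfc f (b * star b)‖
      ≤ ‖(cfc f (star b * b) - cfc p.eval (star b * b)) * star b‖
        + ‖star b * (cfc p.eval (b * star b) - cfc f (b * star b))‖ := by
        rw [hkey]; exact norm_add_le _ _
    _ ≤ ε' * ‖b‖ + ‖b‖ * ε' := by
        gcongr
        · exact (norm_mul_le _ _).trans (by rw [norm_star]; gcongr)
        · exact (norm_mul_le _ _).trans (by rw [norm_star]; gcongr)
    _ ≤ ε := by
        have h2 : ε' * (2 * (‖b‖ + 1)) = ε := by
          exact div_mul_cancel₀ ε (by positivity)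
        nlinarith [norm_nonneg b, hε'.le]




lemma specRadius_mul_comm (x y : A) :
    spectralRadius ℂ (x * y) = spectralRadius ℂ (y * x) := by
  have key : ∀ u v : A, spectralRadius ℂ (u * v) ≤ spectralRadius ℂ (v * u) := by
    intro u v
    rw [spectralRadius, spectralRadius]
    refine iSup₂_le fun k hk => ?_
    by_cases hk0 : k = 0
    · simp [hk0]
    · have hmem : k ∈ spectrum ℂ (v * u) := by
        have hswap : spectrum ℂ (u * v) \ {0} = spectrum ℂ (v * u) \ {0} := spectrum.nonzero_mul_comm u v
        have : k ∈ spectrum ℂ (u * v) \ {0} := ⟨hk, hk0⟩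
        rw [hswap] at this
        exact this.1
      exact le_iSup₂ (f := fun k (_ : k ∈ spectrum ℂ (v * u)) => (‖k‖₊ : ℝ≥0∞)) k hmem
  exact le_antisymm (key x y) (key y x)

lemma rp_mul_unit {b : A} (hb : 0 ≤ b) (hbu : IsUnit b) (r s : ℝ) :
    rp b r * rp b s = rp b (r + s) := by
  have hpos : ∀ x ∈ spectrum ℝ b, 0 < x := fun x hx =>
    (spectrum_nonneg_of_nonneg hb hx).lt_of_ne' <| by
      rintro rfl
      exact (spectrum.zero_notMem_iff ℝ).mpr hbu hx
  have hcont : ∀ t : ℝ, ContinuousOn (fun x : ℝ => x ^ t) (spectrum ℝ b) := fun t x hx =>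
    (Real.continuousAt_rpow_const x t (Or.inl (hpos x hx).ne')).continuousWithinAt
  rw [rp, rp, rp, ← cfc_mul _ _ b (hcont r) (hcont s)]
  exact cfc_congr fun x hx => (Real.rpow_add (hpos x hx) r s).symm

lemma rp_mul_inv_unit {b : A} (hb : 0 ≤ b) (hbu : IsUnit b) (t : ℝ) :
    rp b t * rp b (-t) = 1 := by
  rw [rp_mul_unit hb hbu, add_neg_cancel, rp_zero b (IsSelfAdjoint.of_nonneg hb)]

lemma norm_half_le {a b : A} (ha : 0 ≤ a) (hb : 0 ≤ b) (hbu : IsUnit b) {s : ℝ} (hs : 0 ≤ s)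
    (h : rp a s ≤ rp b s) : ‖rp b (-(s/2)) * rp a (s/2)‖ ≤ 1 := by
  by_cases hs0 : s = 0
  · subst hs0
    norm_num [rp_zero a (IsSelfAdjoint.of_nonneg ha), rp_zero b (IsSelfAdjoint.of_nonneg hb)]
  set c := rp b (-(s/2)) * rp a (s/2) with hc
  have hstar : star c = rp a (s/2) * rp b (-(s/2)) := by
    rw [hc, star_mul, (rp_sa ha (s/2)).star_eq, (rp_sa hb (-(s/2))).star_eq]
  have hccstar : c * star c = rp b (-(s/2)) * rp a s * rp b (-(s/2)) := by
    rw [hc, hstar]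
    have : rp a (s/2) * rp a (s/2) = rp a s := by
      rw [rp_mul ha (by positivity) (by positivity) (by simpa using hs0)]
      norm_num
    calc rp b (-(s/2)) * rp a (s/2) * (rp a (s/2) * rp b (-(s/2)))
        = rp b (-(s/2)) * (rp a (s/2) * rp a (s/2)) * rp b (-(s/2)) := by
          simp only [mul_assoc]
      _ = rp b (-(s/2)) * rp a s * rp b (-(s/2)) := by rw [this]
  have hle1 : c * star c ≤ 1 := by
    rw [hccstar]
    have hconj := star_left_conjugate_le_conjugate h (rp b (-(s/2)))
    rw [(rp_sa hb (-(s/2))).star_eq] at hconj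
    refine hconj.trans_eq ?_
    rw [rp_mul_unit hb hbu, rp_mul_unit hb hbu]
    have : -(s/2) + s + -(s/2) = 0 := by ring
    rw [this, rp_zero b (IsSelfAdjoint.of_nonneg hb)]
  have hnn : 0 ≤ c * star c := mul_star_self_nonneg c
  have hnorm : ‖c * star c‖ ≤ 1 := (CStarAlgebra.norm_le_one_iff_of_nonneg _ hnn).mpr hle1
  rw [CStarRing.norm_self_mul_star] at hnorm
  nlinarith [norm_nonneg c]

lemma midpoint {a b : A} (ha : 0 ≤ a) (hb : 0 ≤ b) (hbu : IsUnit b)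
    {r s : ℝ} (hr : 0 ≤ r) (hs : 0 ≤ s) (hrs : 0 < r + s)
    (h1 : rp a r ≤ rp b r) (h2 : rp a s ≤ rp b s) :
    rp a ((r + s)/2) ≤ rp b ((r + s)/2) := by
  set t : ℝ := (r + s)/2 with ht
  set u : A := rp b (-(t/2)) with hu
  set v : A := rp b (t/2) with hv
  have hvu : v * u = 1 := by rw [hv, hu, rp_mul_inv_unit hb hbu]
  have huv : u * v = 1 := by
    rw [hu, hv]
    have := rp_mul_inv_unit hb hbu (-(t/2))
    simpa using this
  set X : A := rp a t with hX
  have hX0 : 0 ≤ X := rp_nonneg ha t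
  have husa : IsSelfAdjoint u := rp_sa hb _
  have hd0 : 0 ≤ u * X * u := by
    have := star_left_conjugate_nonneg hX0 u
    rwa [husa.star_eq] at this
  have hdsa : IsSelfAdjoint (u * X * u) := .of_nonneg hd0
  -- spectral radius computation
  have hXfact : X = rp a (r/2) * rp a (s/2) := by
    rw [hX, rp_mul ha (by positivity) (by positivity) (by intro hc; apply hrs.ne'; linarith)]
    norm_num [ht]
    ring_nf
  have huu : u * u = rp b (-t) := by
    rw [hu, rp_mul_unit hb hbu]
    congr 1
    ring
  have hbt : rp b (-t) = rp b (-(s/2)) * rp b (-(r/2)) := by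
    rw [rp_mul_unit hb hbu]
    congr 1
    ring
  have hrad : spectralRadius ℂ (u * X * u) =
      spectralRadius ℂ ((rp a (s/2) * rp b (-(s/2)) * rp b (-(r/2))) * rp a (r/2)) := by
    rw [specRadius_mul_comm (u * X) u, ← mul_assoc, huu]
    rw [specRadius_mul_comm (rp b (-t)) X, hXfact, hbt]
    rw [mul_assoc (rp a (r/2)), specRadius_mul_comm (rp a (r/2))]
    congr 1
    simp only [mul_assoc]
  have hnorm1 : ‖rp a (s/2) * rp b (-(s/2))‖₊ ≤ 1 := by
    have := norm_half_le ha hb hbu hs h2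
    have hstar : star (rp b (-(s/2)) * rp a (s/2)) = rp a (s/2) * rp b (-(s/2)) := by
      rw [star_mul, (rp_sa ha (s/2)).star_eq, (rp_sa hb (-(s/2))).star_eq]
    rw [← hstar, nnnorm_star]
    exact_mod_cast this
  have hnorm2 : ‖rp b (-(r/2)) * rp a (r/2)‖₊ ≤ 1 := norm_half_le ha hb hbu hr h1
  have hrad_le : spectralRadius ℂ (u * X * u) ≤ 1 := by
    rw [hrad]
    refine (spectrum.spectralRadius_le_nnnorm _).trans ?_
    have : (rp a (s/2) * rp b (-(s/2)) * rp b (-(r/2))) * rp a (r/2)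
        = (rp a (s/2) * rp b (-(s/2))) * (rp b (-(r/2)) * rp a (r/2)) := by
      simp only [mul_assoc]
    rw [this]
    calc (‖(rp a (s/2) * rp b (-(s/2))) * (rp b (-(r/2)) * rp a (r/2))‖₊ : ℝ≥0∞)
        ≤ (‖rp a (s/2) * rp b (-(s/2))‖₊ * ‖rp b (-(r/2)) * rp a (r/2)‖₊ : ℝ≥0) := by
          exact_mod_cast ENNReal.coe_le_coe.mpr (nnnorm_mul_le _ _)
      _ ≤ 1 := by
          rw [ENNReal.coe_mul]
          calc (‖rp a (s/2) * rp b (-(s/2))‖₊ : ℝ≥0∞) * ‖rp b (-(r/2)) * rp a (r/2)‖₊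
              ≤ 1 * 1 := by
                gcongr <;> exact_mod_cast ENNReal.coe_le_coe.mpr ‹_›
            _ = 1 := one_mul 1
  have hdnorm : ‖u * X * u‖ ≤ 1 := by
    have := hdsa.spectralRadius_eq_nnnorm
    rw [this] at hrad_le
    have h' : ‖u * X * u‖₊ ≤ 1 := by exact_mod_cast hrad_le
    exact_mod_cast h'
  have hdle : u * X * u ≤ 1 := (CStarAlgebra.norm_le_one_iff_of_nonneg _ hd0).mp hdnorm
  have hconj := star_left_conjugate_le_conjugate hdle v
  rw [(rp_sa hb (t/2)).star_eq] at hconj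
  have lhs_eq : v * (u * X * u) * v = X := by
    calc v * (u * X * u) * v = v * u * X * (u * v) := by simp only [mul_assoc]
      _ = X := by rw [hvu, huv, one_mul, mul_one]
  have rhs_eq : v * 1 * v = rp b t := by
    rw [mul_one, hv, rp_mul_unit hb hbu]
    norm_num
  rw [lhs_eq, rhs_eq] at hconj
  exact hconj



lemma real_rpow_add_le {x ε r : ℝ} (hx : 0 ≤ x) (hε : 0 ≤ ε) (hr0 : 0 ≤ r) (hr1 : r ≤ 1) :
    (x + ε) ^ r ≤ x ^ r + ε ^ r := by
  rw [← Real.coe_toNNReal x hx, ← Real.coe_toNNReal ε hε, ← NNReal.coe_add,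
    ← NNReal.coe_rpow, ← NNReal.coe_rpow, ← NNReal.coe_rpow, ← NNReal.coe_add,
    NNReal.coe_le_coe]
  exact NNReal.rpow_add_le_add_rpow _ _ hr0 hr1

lemma rp_tendsto_exp {a : A} (ha : 0 ≤ a) {r : ℝ} (hr0 : 0 < r) (hr1 : r ≤ 1)
    {u : ℕ → ℝ} (hu : ∀ n, u n ∈ Set.Icc (r/2) 1) (hur : Filter.Tendsto u atTop (𝓝 r)) :
    Filter.Tendsto (fun n => rp a (u n)) atTop (𝓝 (rp a r)) := by
  have hsa : IsSelfAdjoint a := .of_nonneg ha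
  set M := ‖a‖ with hM
  set K : Set ℝ := Set.Icc 0 M with hK
  set J : Set ℝ := Set.Icc (r/2) 1 with hJ
  have hrJ : r ∈ J := ⟨by linarith, hr1⟩
  have hFc : Continuous (fun z : J × K => ((z.2 : ℝ)) ^ ((z.1 : ℝ))) := by
    rw [continuous_iff_continuousAt]
    intro z
    have hz : (0 : ℝ) < (z.1 : ℝ) := lt_of_lt_of_le (by linarith) z.1.2.1
    have h1 : ContinuousAt (fun p : ℝ × ℝ => p.1 ^ p.2) ((z.2 : ℝ), (z.1 : ℝ)) :=
      Real.continuousAt_rpow _ (Or.inr hz)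
    have h2 : Continuous (fun z : J × K => ((z.2 : ℝ), (z.1 : ℝ))) := by fun_prop
    have h3 : ContinuousAt ((fun p : ℝ × ℝ => p.1 ^ p.2) ∘ fun z : J × K =>
        ((z.2 : ℝ), (z.1 : ℝ))) z :=
      ContinuousAt.comp (f := fun z : J × K => ((z.2 : ℝ), (z.1 : ℝ))) (x := z)
        h1 h2.continuousAt
    exact h3
  set G := ContinuousMap.curry ⟨_, hFc⟩ with hG
  have huJ : Filter.Tendsto (fun n => (⟨u n, hu n⟩ : J)) atTop (𝓝 (⟨r, hrJ⟩ : J)) := by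
    rw [tendsto_subtype_rng]
    exact hur
  have hGt : Filter.Tendsto (fun n => G ⟨u n, hu n⟩) atTop (𝓝 (G ⟨r, hrJ⟩)) :=
    (G.continuous.tendsto _).comp huJ
  have hspec : spectrum ℝ a ⊆ K := fun x hx =>
    ⟨spectrum_nonneg_of_nonneg ha hx, by
      have := spectrum.norm_le_norm_of_mem hx
      rw [Real.norm_eq_abs] at this
      exact (le_abs_self x).trans this⟩
  have hbound : ∀ n, ‖rp a (u n) - rp a r‖ ≤ dist (G ⟨u n, hu n⟩) (G ⟨r, hrJ⟩) := by
    intro n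
    rw [rp, rp, ← cfc_sub _ _ a (rpow_cont (by linarith [(hu n).1] : (0:ℝ) ≤ u n)).continuousOn
      (rpow_cont hr0.le).continuousOn]
    refine norm_cfc_le dist_nonneg fun x hx => ?_
    have hxK : x ∈ K := hspec hx
    calc ‖x ^ (u n) - x ^ r‖
        = dist (G ⟨u n, hu n⟩ ⟨x, hxK⟩) (G ⟨r, hrJ⟩ ⟨x, hxK⟩) := by
          rw [dist_eq_norm]
          simp [hG, ContinuousMap.curry_apply]
      _ ≤ dist (G ⟨u n, hu n⟩) (G ⟨r, hrJ⟩) := ContinuousMap.dist_apply_le_dist _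
  rw [tendsto_iff_dist_tendsto_zero]
  have hda : Filter.Tendsto (fun n => dist (G ⟨u n, hu n⟩) (G ⟨r, hrJ⟩)) atTop (𝓝 0) := by
    exact tendsto_iff_dist_tendsto_zero.1 hGt
  exact squeeze_zero (fun n => dist_nonneg)
    (fun n => le_trans (le_of_eq (dist_eq_norm _ _)) (hbound n)) hda

lemma dyadic_good {a b : A} (ha : 0 ≤ a) (hb : 0 ≤ b) (hbu : IsUnit b) (hab : a ≤ b) :
    ∀ n k : ℕ, k ≤ 2 ^ n → rp a ((k : ℝ) / 2 ^ n) ≤ rp b ((k : ℝ) / 2 ^ n) := by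
  intro n
  induction n with
  | zero =>
      intro k hk
      interval_cases k
      · simp only [Nat.cast_zero, pow_zero, zero_div]
        rw [rp_zero a (.of_nonneg ha), rp_zero b (.of_nonneg hb)]
      · simp only [Nat.cast_one, pow_zero, div_one]
        rw [rp_one ha, rp_one hb]
        exact hab
  | succ n ih =>
      intro k hk
      have hpow : (2:ℕ) ^ (n+1) = 2 ^ n * 2 := pow_succ 2 n
      rcases Nat.even_or_odd k with ⟨m, hm⟩ | ⟨m, hm⟩
      · have hm2 : m ≤ 2 ^ n := by omega
        have harith : ((k : ℝ)) / 2 ^ (n+1) = (m : ℝ) / 2 ^ n := by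
          subst hm
          push_cast
          rw [pow_succ]
          field_simp
          ring
        rw [harith]
        exact ih m hm2
      · have hm1 : m ≤ 2 ^ n := by omega
        have hm2 : m + 1 ≤ 2 ^ n := by omega
        have h1 := ih m hm1
        have h2 := ih (m+1) hm2
        have hmid := midpoint ha hb hbu (by positivity : (0:ℝ) ≤ (m:ℝ)/2^n)
          (by positivity : (0:ℝ) ≤ ((m:ℝ)+1)/2^n)
          (by positivity) h1 (by push_cast at h2 ⊢; exact h2)
        have harith : ((k : ℝ)) / 2 ^ (n+1) = ((m : ℝ)/2^n + ((m:ℝ)+1)/2^n)/2 := by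
          subst hm
          push_cast
          rw [pow_succ]
          field_simp
          ring
        rw [harith]
        exact hmid

lemma LH_unit {a b : A} (ha : 0 ≤ a) (hb : 0 ≤ b) (hbu : IsUnit b) (hab : a ≤ b)
    {r : ℝ} (hr0 : 0 ≤ r) (hr1 : r ≤ 1) : rp a r ≤ rp b r := by
  rcases eq_or_lt_of_le hr0 with rfl | hr0'
  · rw [rp_zero a (.of_nonneg ha), rp_zero b (.of_nonneg hb)]
  set u : ℕ → ℝ := fun n => (⌈r * 2 ^ n⌉₊ : ℝ) / 2 ^ n with hu_def
  have hpow_pos : ∀ n : ℕ, (0:ℝ) < 2 ^ n := fun n => by positivity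
  have hu_ge : ∀ n, r ≤ u n := by
    intro n
    rw [hu_def, le_div_iff₀ (hpow_pos n)]
    exact Nat.le_ceil _
  have hu_le1 : ∀ n, u n ≤ 1 := by
    intro n
    rw [hu_def, div_le_one (hpow_pos n)]
    have : (⌈r * 2 ^ n⌉₊ : ℕ) ≤ 2 ^ n := by
      rw [Nat.ceil_le]
      push_cast
      nlinarith [hpow_pos n]
    calc ((⌈r * 2 ^ n⌉₊ : ℕ) : ℝ) ≤ ((2^n : ℕ) : ℝ) := by exact_mod_cast this
      _ = 2 ^ n := by push_cast; ring
  have hu_lt : ∀ n, u n ≤ r + 1 / 2 ^ n := by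
    intro n
    rw [hu_def, div_le_iff₀ (hpow_pos n)]
    have := (Nat.ceil_lt_add_one (by positivity : (0:ℝ) ≤ r * 2 ^ n)).le
    calc (⌈r * 2 ^ n⌉₊ : ℝ) ≤ r * 2 ^ n + 1 := this
      _ = (r + 1 / 2 ^ n) * 2 ^ n := by field_simp
  have htend : Filter.Tendsto u atTop (𝓝 r) := by
    have hlow : Filter.Tendsto (fun _ : ℕ => r) atTop (𝓝 r) := tendsto_const_nhds
    have hup : Filter.Tendsto (fun n : ℕ => r + 1 / 2 ^ n) atTop (𝓝 (r + 0)) := by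
      refine Filter.Tendsto.add tendsto_const_nhds ?_
      simp only [one_div, ← inv_pow]
      exact tendsto_pow_atTop_nhds_zero_of_lt_one (by norm_num) (by norm_num)
    rw [add_zero] at hup
    exact tendsto_of_tendsto_of_tendsto_of_le_of_le hlow hup hu_ge hu_lt
  have hgood : ∀ n, rp a (u n) ≤ rp b (u n) := by
    intro n
    have hceil : (⌈r * 2 ^ n⌉₊ : ℕ) ≤ 2 ^ n := by
      rw [Nat.ceil_le]
      push_cast
      nlinarith [hpow_pos n]
    have := dyadic_good ha hb hbu hab n ⌈r * 2 ^ n⌉₊ hceil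
    convert this using 2 <;> push_cast <;> ring
  have hmem : ∀ n, u n ∈ Set.Icc (r/2) 1 := fun n =>
    ⟨le_trans (by linarith) (hu_ge n), hu_le1 n⟩
  have hta := rp_tendsto_exp ha hr0' hr1 hmem htend
  have htb := rp_tendsto_exp hb hr0' hr1 hmem htend
  have hnn : ∀ n, rp b (u n) - rp a (u n) ∈ {x : A | 0 ≤ x} :=
    fun n => sub_nonneg.mpr (hgood n)
  have hlim : Filter.Tendsto (fun n => rp b (u n) - rp a (u n)) atTop
      (𝓝 (rp b r - rp a r)) := htb.sub hta
  have hcl : rp b r - rp a r ∈ {x : A | 0 ≤ x} :=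
    CStarAlgebra.isClosed_nonneg.mem_of_tendsto hlim (Filter.Eventually.of_forall hnn)
  exact sub_nonneg.mp hcl

lemma LH {a b : A} (ha : 0 ≤ a) (hb : 0 ≤ b) (hab : a ≤ b)
    {r : ℝ} (hr0 : 0 ≤ r) (hr1 : r ≤ 1) : rp a r ≤ rp b r := by
  rcases eq_or_lt_of_le hr0 with rfl | hr0'
  · rw [rp_zero a (.of_nonneg ha), rp_zero b (.of_nonneg hb)]
  set e : ℕ → ℝ := fun n => 1 / (n + 1) with he_def
  have he_pos : ∀ n, 0 < e n := fun n => by positivity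
  set bn : ℕ → A := fun n => b + algebraMap ℝ A (e n) with hbn_def
  have halg_nn : ∀ n, 0 ≤ algebraMap ℝ A (e n) := fun n => by
    rw [Algebra.algebraMap_eq_smul_one]
    exact smul_nonneg (he_pos n).le zero_le_one
  have hbn_nn : ∀ n, 0 ≤ bn n := fun n => add_nonneg hb (halg_nn n)
  have habn : ∀ n, a ≤ bn n := fun n => hab.trans (le_add_of_nonneg_right (halg_nn n))
  have hbn_unit : ∀ n, IsUnit (bn n) := by
    intro n
    refine CStarAlgebra.isUnit_of_le _ (le_add_of_nonneg_left hb) (IsUnit.isStrictlyPositive ?_ (halg_nn n))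
    exact (isUnit_iff_ne_zero.mpr (he_pos n).ne').map (algebraMap ℝ A)
  have hkey : ∀ n, rp a r ≤ rp (bn n) r :=
    fun n => LH_unit ha (hbn_nn n) (hbn_unit n) (habn n) hr0 hr1
  have hbsa : IsSelfAdjoint b := .of_nonneg hb
  have hbn_eq : ∀ n, rp (bn n) r = cfc (fun x : ℝ => (x + e n) ^ r) b := by
    intro n
    have h1 : bn n = cfc (fun x : ℝ => x + e n) b := by
      rw [cfc_add b (fun x : ℝ => x) (fun _ => e n) (continuous_id.continuousOn)
        continuousOn_const, cfc_id' ℝ b, cfc_const (e n) b]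
    rw [rp, h1, ← cfc_comp (fun x : ℝ => x ^ r) (fun x : ℝ => x + e n) b hbsa
      (rpow_cont hr0).continuousOn (by fun_prop)]
    rfl
  have hest : ∀ n, ‖rp (bn n) r - rp b r‖ ≤ (e n) ^ r := by
    intro n
    have hc1 : Continuous (fun x : ℝ => (x + e n) ^ r) :=
      (rpow_cont hr0).comp (by fun_prop)
    rw [hbn_eq n, rp, ← cfc_sub _ _ b hc1.continuousOn (rpow_cont hr0).continuousOn]
    refine norm_cfc_le (by positivity) fun x hx => ?_
    have hx0 : 0 ≤ x := spectrum_nonneg_of_nonneg hb hx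
    have hmono : x ^ r ≤ (x + e n) ^ r :=
      Real.rpow_le_rpow hx0 (by linarith [he_pos n]) hr0
    rw [Real.norm_eq_abs, abs_of_nonneg (sub_nonneg.mpr hmono)]
    have := real_rpow_add_le hx0 (he_pos n).le hr0 hr1
    linarith
  have hepow : Filter.Tendsto (fun n => (e n) ^ r) atTop (𝓝 0) := by
    have h1 : Filter.Tendsto e atTop (𝓝 0) := by
      simpa [he_def] using tendsto_one_div_add_atTop_nhds_zero_nat (𝕜 := ℝ)
    have h2 : ContinuousAt (fun x : ℝ => x ^ r) 0 :=
      Real.continuousAt_rpow_const 0 r (Or.inr hr0)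
    have := (h2.tendsto).comp h1
    rwa [Real.zero_rpow hr0'.ne'] at this
  have hsub : Filter.Tendsto (fun n => rp (bn n) r - rp b r) atTop (𝓝 0) :=
    squeeze_zero_norm hest hepow
  have htend : Filter.Tendsto (fun n => rp (bn n) r) atTop (𝓝 (rp b r)) := by
    have := hsub.add_const (rp b r)
    simpa using this
  have hnn : ∀ n, rp (bn n) r - rp a r ∈ {x : A | 0 ≤ x} :=
    fun n => sub_nonneg.mpr (hkey n)
  have hlim : Filter.Tendsto (fun n => rp (bn n) r - rp a r) atTop
      (𝓝 (rp b r - rp a r)) := htend.sub tendsto_const_nhds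
  have hcl : rp b r - rp a r ∈ {x : A | 0 ≤ x} :=
    CStarAlgebra.isClosed_nonneg.mem_of_tendsto hlim (Filter.Eventually.of_forall hnn)
  exact sub_nonneg.mp hcl


lemma hansen {χ η : A} (hχsa : IsSelfAdjoint χ) (hηsa : IsSelfAdjoint η)
    (hχ0 : (0 : A) ≤ χ) (hχ1 : χ ≤ 1) (hη0 : (0 : A) ≤ η)
    {q : ℝ} (hq1 : 1 ≤ q) (hq2 : q ≤ 2) :
    cfc (fun x : ℝ => x ^ q) (χ * η * χ) ≤ χ * cfc (fun x : ℝ => x ^ q) η * χ := by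
  set r : ℝ := q - 1 with hr_def
  have hr0 : 0 ≤ r := by linarith
  have hr1 : r ≤ 1 := by linarith
  set sη : A := rp η (1/2) with hsη_def
  have hsη_nn : 0 ≤ sη := rp_nonneg hη0 _
  have hsη_sa : IsSelfAdjoint sη := rp_sa hη0 _
  have hsq : sη * sη = η := by
    rw [hsη_def, rp_mul hη0 (by norm_num) (by norm_num) (by norm_num)]
    norm_num [rp_one hη0]
  set b : A := sη * χ with hb_def
  have hstarb : star b = χ * sη := by
    rw [hb_def, star_mul, hχsa.star_eq, hsη_sa.star_eq]
  have hs0 : star b * b = χ * η * χ := by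
    rw [hstarb, hb_def]
    calc χ * sη * (sη * χ) = χ * (sη * sη) * χ := by simp only [mul_assoc]
      _ = χ * η * χ := by rw [hsq]
  have ht0 : b * star b = sη * (χ * χ) * sη := by
    rw [hstarb, hb_def]
    simp only [mul_assoc]
  have hs0nn : 0 ≤ χ * η * χ := by rw [← hs0]; exact star_mul_self_nonneg b
  have ht0nn : 0 ≤ b * star b := mul_star_self_nonneg b
  have hχ2 : χ * χ ≤ 1 := by
    have h21 := CStarAlgebra.pow_antitone hχ0 hχ1 (by norm_num : (1:ℕ) ≤ 2)
    simp only [pow_two, pow_one] at h21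
    exact h21.trans hχ1
  have htle : b * star b ≤ η := by
    rw [ht0]
    have hconj := star_left_conjugate_le_conjugate hχ2 sη
    rw [hsη_sa.star_eq, mul_one, hsq] at hconj
    exact hconj
  have hLH : rp (b * star b) r ≤ rp η r :=
    LH ht0nn hη0 htle hr0 hr1
  have hconj : star b * rp (b * star b) r * b ≤ star b * rp η r * b :=
    star_left_conjugate_le_conjugate hLH b
  -- LHS identity
  have hq_ne : r + 1 = q := by rw [hr_def]; ring
  have hLHS : cfc (fun x : ℝ => x ^ q) (χ * η * χ) = star b * rp (b * star b) r * b := by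
    rw [← hs0]
    have h1 : cfc (fun x : ℝ => x ^ q) (star b * b) = rp (star b * b) (r + 1) := by
      rw [hq_ne]; rfl
    rw [h1, ← rp_mul (by rw [hs0]; exact hs0nn) hr0 zero_le_one (by linarith),
      rp_one (by rw [hs0]; exact hs0nn)]
    have hswap : rp (star b * b) r * star b = star b * rp (b * star b) r :=
      cfc_swap _ (rpow_cont hr0) b
    calc rp (star b * b) r * (star b * b)
        = (rp (star b * b) r * star b) * b := by simp only [mul_assoc]
      _ = (star b * rp (b * star b) r) * b := by rw [hswap]
  -- RHS identity
  have hRHS : star b * rp η r * b = χ * cfc (fun x : ℝ => x ^ q) η * χ := by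
    have hmid : sη * rp η r * sη = cfc (fun x : ℝ => x ^ q) η := by
      rw [hsη_def, rp_mul hη0 (by norm_num) hr0 (by positivity),
        rp_mul hη0 (by positivity) (by norm_num) (by positivity)]
      have h12 : 1/2 + r + 1/2 = q := by rw [hr_def]; ring
      rw [h12]
      rfl
    rw [hstarb, hb_def, ← hmid]
    simp only [mul_assoc]
  rw [hLHS, ← hRHS]
  exact hconj

end HansenAux

/-- **Loewner order inequality for powers `q ∈ [1, 2]`.**
If `χ, η` are bounded self-adjoint operators on a complex Hilbert space `H` with
`0 ≤ χ ≤ 1` and `0 ≤ η` (Loewner order), and `q ∈ [1, 2]`, then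
`(χ η χ)^q ≤ χ η^q χ`, where powers are taken via the continuous functional calculus. -/
theorem pow_chi_le_chi_pow {H : Type*} [NormedAddCommGroup H] [InnerProductSpace ℂ H]
    [CompleteSpace H] (χ η : H →L[ℂ] H)
    (hχsa : IsSelfAdjoint χ) (hηsa : IsSelfAdjoint η)
    (hχ0 : (0 : H →L[ℂ] H) ≤ χ) (hχ1 : χ ≤ 1) (hη0 : (0 : H →L[ℂ] H) ≤ η)
    (q : ℝ) (hq : q ∈ Set.Icc (1 : ℝ) 2) :
    cfc (fun x : ℝ => x ^ q) (χ * η * χ) ≤ χ * cfc (fun x : ℝ => x ^ q) η * χ := by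
  obtain htriv | hnt := subsingleton_or_nontrivial (H →L[ℂ] H)
  · exact le_of_eq (Subsingleton.elim _ _)
  exact HansenAux.hansen hχsa hηsa hχ0 hχ1 hη0 hq.1 hq.2
end

section
/- Let H be a complex Hilbert space and let χ and γ be bounded self-adjoint operators on H with 0 ≤ χ ≤ 1 and 0 ≤ γ. Then χ γ^{1/2} χ ≤ (χ γ χ)^{1/2} in the Loewner order. -/
open scoped NNReal ENNReal

section AuxSqrtMono

lemma myRadiusMulComm {B : Type*} [NormedRing B] [NormedAlgebra ℂ B] (a b : B) :
    spectralRadius ℂ (a * b) = spectralRadius ℂ (b * a) := by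
  have key : ∀ x y : B, spectralRadius ℂ (x * y) ≤ spectralRadius ℂ (y * x) := by
    intro x y
    rw [spectralRadius, spectralRadius]
    refine iSup₂_le fun k hk => ?_
    rcases eq_or_ne k 0 with rfl | hk0
    · simp
    · have : k ∈ spectrum ℂ (y * x) :=
        ((spectrum.nonzero_mul_comm x y).subset ⟨hk, hk0⟩).1
      exact le_iSup₂ (f := fun k (_ : k ∈ spectrum ℂ (y * x)) => (‖k‖₊ : ℝ≥0∞)) k this
  exact le_antisymm (key a b) (key b a)

variable {A : Type*} [CStarAlgebra A] [PartialOrder A] [StarOrderedRing A]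

/-- Monotonicity of the square root when the larger element is invertible. -/
lemma mySqrtMonoUnit {a b : A} (ha : 0 ≤ a) (hab : a ≤ b) (hbu : IsUnit b) :
    CFC.sqrt a ≤ CFC.sqrt b := by
  have hb : 0 ≤ b := ha.trans hab
  nontriviality A
  lift b to Aˣ using hbu
  have h5 : ‖CFC.sqrt a * CFC.sqrt ((b⁻¹ : Aˣ) : A)‖ ≤ 1 :=
    (le_iff_norm_sqrt_mul_sqrt_inv ha hb).mp hab
  have hb0spec : 0 ∉ spectrum ℝ≥0 (b : A) := b.zero_notMem_spectrum ℝ≥0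
  set s := CFC.sqrt (b : A) with hs
  have hs0 : 0 ≤ s := CFC.sqrt_nonneg _
  have hss : s * s = (b : A) := CFC.sqrt_mul_sqrt_self _ hb
  have hcomm : Commute s (b : A) := by
    show s * (b : A) = (b : A) * s
    rw [← hss, mul_assoc]
  have hsu : IsUnit s := by
    refine isUnit_iff_exists.mpr ⟨s * ((b⁻¹ : Aˣ) : A), ?_, ?_⟩
    · rw [← mul_assoc, hss]; exact b.mul_inv
    · rw [mul_assoc, ← (hcomm.units_inv_right).eq, ← mul_assoc, hss]; exact b.mul_inv
  rw [le_iff_norm_sqrt_mul_rpow (CFC.sqrt a) s (CFC.sqrt_nonneg _) (hsu.isStrictlyPositive hs0)]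
  set x := CFC.sqrt (CFC.sqrt a) with hx
  set y := s ^ (-(1 / 2) : ℝ) with hy
  have hx0 : 0 ≤ x := CFC.sqrt_nonneg _
  have hy0 : 0 ≤ y := CFC.rpow_nonneg
  have hxx : x * x = CFC.sqrt a := CFC.sqrt_mul_sqrt_self _ (CFC.sqrt_nonneg _)
  have hyb : y = (b : A) ^ (-(1 / 4) : ℝ) := by
    rw [hy, hs, CFC.sqrt_eq_rpow, CFC.rpow_rpow _ _ _ (by norm_num) (b.isStrictlyPositive_of_le hb)]
    norm_num
  have hyy : y * y = (b : A) ^ (-(1 / 2) : ℝ) := by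
    rw [hyb, ← CFC.rpow_add b.isUnit]; norm_num
  have h4 : y * y = CFC.sqrt ((b⁻¹ : Aˣ) : A) := by
    rw [hyy, CFC.sqrt_eq_rpow (a := ((b⁻¹ : Aˣ) : A)), ← CFC.rpow_neg_one_eq_inv b,
      CFC.rpow_rpow _ _ _ (by norm_num) (b.isStrictlyPositive_of_le hb)]
    norm_num
  rw [← sq_le_one_iff₀ (norm_nonneg _), sq, ← CStarRing.norm_star_mul_self, star_mul,
    (IsSelfAdjoint.of_nonneg hx0).star_eq, (IsSelfAdjoint.of_nonneg hy0).star_eq]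
  have hc0 : 0 ≤ y * CFC.sqrt a * y := conjugate_nonneg_of_nonneg (CFC.sqrt_nonneg _) hy0
  have h1 : (‖y * CFC.sqrt a * y‖₊ : ℝ≥0∞) = spectralRadius ℂ (y * CFC.sqrt a * y) :=
    ((IsSelfAdjoint.of_nonneg hc0).spectralRadius_eq_nnnorm).symm
  have h2 : spectralRadius ℂ (y * CFC.sqrt a * y) = spectralRadius ℂ (CFC.sqrt a * (y * y)) := by
    rw [mul_assoc, myRadiusMulComm, mul_assoc]
  have h3 : spectralRadius ℂ (CFC.sqrt a * (y * y)) ≤ ‖CFC.sqrt a * (y * y)‖₊ :=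
    spectrum.spectralRadius_le_nnnorm _
  have hnorm : ‖y * CFC.sqrt a * y‖ ≤ 1 := by
    have hle : (‖y * CFC.sqrt a * y‖₊ : ℝ≥0∞) ≤ ‖CFC.sqrt a * (y * y)‖₊ := by
      rw [h1, h2]; exact h3
    have h6 : ‖CFC.sqrt a * (y * y)‖ ≤ 1 := by rw [h4]; exact h5
    calc ‖y * CFC.sqrt a * y‖ ≤ ‖CFC.sqrt a * (y * y)‖ := by
          exact_mod_cast ENNReal.coe_le_coe.mp hle
      _ ≤ 1 := h6
  calc ‖y * x * (x * y)‖ = ‖y * (x * x) * y‖ := by congr 1; noncomm_ring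
    _ = ‖y * CFC.sqrt a * y‖ := by rw [hxx]
    _ ≤ 1 := hnorm

/-- Operator monotonicity of the square root. -/
lemma mySqrtMono {a b : A} (ha : 0 ≤ a) (hab : a ≤ b) : CFC.sqrt a ≤ CFC.sqrt b := by
  have hb : 0 ≤ b := ha.trans hab
  have key : ∀ ε : ℝ≥0, 0 < ε →
      CFC.sqrt a ≤ CFC.sqrt b + algebraMap ℝ≥0 A (NNReal.sqrt ε) := by
    intro ε hε
    set c := b + algebraMap ℝ≥0 A ε with hc
    have halg : 0 ≤ algebraMap ℝ≥0 A ε := by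
      rw [← cfc_const ε b hb]
      exact cfc_predicate _ b
    have hcb : c = cfc (fun x : ℝ≥0 => ε + x) b := by
      rw [cfc_const_add ε (fun x : ℝ≥0 => x) b, cfc_id' ℝ≥0 b, hc, add_comm]
    have hcu : IsUnit c := by
      refine CStarAlgebra.isUnit_of_le (algebraMap ℝ≥0 A ε) (le_add_of_nonneg_left hb) (IsUnit.isStrictlyPositive ?_ halg)
      · exact (isUnit_iff_ne_zero.mpr hε.ne').map (algebraMap ℝ≥0 A)
    have hc0 : 0 ≤ c := add_nonneg hb halg
    have hac : a ≤ c := hab.trans (le_add_of_nonneg_right halg)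
    refine (mySqrtMonoUnit ha hac hcu).trans ?_
    have h1 : CFC.sqrt c = cfc (fun x : ℝ≥0 => NNReal.sqrt (ε + x)) b := by
      rw [CFC.sqrt_eq_cfc, hcb, ← cfc_comp' NNReal.sqrt (fun x : ℝ≥0 => ε + x) b]
    rw [h1]
    calc cfc (fun x : ℝ≥0 => NNReal.sqrt (ε + x)) b
        ≤ cfc (fun x : ℝ≥0 => NNReal.sqrt ε + NNReal.sqrt x) b := by
          refine cfc_mono fun x hx => ?_
          calc NNReal.sqrt (ε + x)
              ≤ NNReal.sqrt ((NNReal.sqrt ε + NNReal.sqrt x) ^ 2) := by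
                apply NNReal.sqrt_le_sqrt.mpr
                rw [add_sq, NNReal.sq_sqrt, NNReal.sq_sqrt]
                calc ε + x ≤ ε + (2 * NNReal.sqrt ε * NNReal.sqrt x + x) :=
                      add_le_add_right (le_add_of_nonneg_left zero_le) ε
                  _ = ε + 2 * NNReal.sqrt ε * NNReal.sqrt x + x := by ring
            _ = NNReal.sqrt ε + NNReal.sqrt x := NNReal.sqrt_sq _
      _ = CFC.sqrt b + algebraMap ℝ≥0 A (NNReal.sqrt ε) := by
          rw [cfc_const_add (NNReal.sqrt ε) NNReal.sqrt b, CFC.sqrt_eq_cfc, add_comm]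
  have main : ∀ δ : ℝ≥0, 0 < δ →
      CFC.sqrt b - CFC.sqrt a + algebraMap ℝ≥0 A δ ∈ {x : A | 0 ≤ x} := by
    intro δ hδ
    have hk := key (δ * δ) (by positivity)
    rw [NNReal.sqrt_mul_self] at hk
    have h2 : CFC.sqrt b + algebraMap ℝ≥0 A δ - CFC.sqrt a
        = CFC.sqrt b - CFC.sqrt a + algebraMap ℝ≥0 A δ := by abel
    exact h2 ▸ sub_nonneg.mpr hk
  have hcont : Continuous (fun δ : ℝ≥0 => CFC.sqrt b - CFC.sqrt a + algebraMap ℝ≥0 A δ) := by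
    simp only [Algebra.algebraMap_eq_smul_one]
    exact continuous_const.add (continuous_id.smul continuous_const)
  have htend : Filter.Tendsto (fun δ : ℝ≥0 => CFC.sqrt b - CFC.sqrt a + algebraMap ℝ≥0 A δ)
      (nhdsWithin 0 (Set.Ioi 0)) (nhds (CFC.sqrt b - CFC.sqrt a)) := by
    have := (hcont.tendsto 0).mono_left (nhdsWithin_le_nhds (s := Set.Ioi 0))
    simpa using this
  have hmem := CStarAlgebra.isClosed_nonneg (A := A) |>.mem_of_tendsto htend
    (Filter.eventually_of_mem self_mem_nhdsWithin fun δ hδ => main δ hδ)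
  exact sub_nonneg.mp hmem

lemma mySqrtEqCfcRpow {a : A} (ha : 0 ≤ a) :
    cfc (fun x : ℝ => x ^ (1 / 2 : ℝ)) a = CFC.sqrt a := by
  rw [CFC.sqrt_eq_cfc, cfc_nnreal_eq_real _ a ha]
  apply cfc_congr
  intro x hx
  have hx0 : 0 ≤ x := spectrum_nonneg_of_nonneg ha hx
  simp only []
  rw [Real.coe_sqrt, Real.sqrt_eq_rpow, Real.coe_toNNReal _ hx0]

end AuxSqrtMono

set_option synthInstance.maxHeartbeats 1000000 in
set_option maxHeartbeats 1000000 in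
/-- **Loewner order inequality for the square root.**
If `χ, γ` are bounded self-adjoint operators on a complex Hilbert space `H` with
`0 ≤ χ ≤ 1` and `0 ≤ γ` (Loewner order), then `χ γ^{1/2} χ ≤ (χ γ χ)^{1/2}`, where the square
root is taken via the continuous functional calculus. -/
theorem chi_sqrt_chi_le {H : Type*} [NormedAddCommGroup H] [InnerProductSpace ℂ H]
    [CompleteSpace H] (χ γ : H →L[ℂ] H)
    (hχsa : IsSelfAdjoint χ) (hγsa : IsSelfAdjoint γ)
    (hχ0 : (0 : H →L[ℂ] H) ≤ χ) (hχ1 : χ ≤ 1) (hγ0 : (0 : H →L[ℂ] H) ≤ γ) :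
    χ * cfc (fun x : ℝ => x ^ (1 / 2 : ℝ)) γ * χ ≤
      cfc (fun x : ℝ => x ^ (1 / 2 : ℝ)) (χ * γ * χ) := by
  have hχγχ : 0 ≤ χ * γ * χ := by
    have := star_right_conjugate_nonneg hγ0 χ
    rwa [hχsa.star_eq] at this
  rw [mySqrtEqCfcRpow hγ0, mySqrtEqCfcRpow hχγχ]
  set s := CFC.sqrt γ with hs
  have hs0 : 0 ≤ s := CFC.sqrt_nonneg _
  have hd0 : 0 ≤ χ * s * χ := by
    have := star_right_conjugate_nonneg hs0 χ
    rwa [hχsa.star_eq] at this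
  have hsq : (χ * s * χ) * (χ * s * χ) ≤ χ * γ * χ := by
    have hχ2 : χ * χ ≤ 1 := by
      have := CStarAlgebra.pow_antitone hχ0 hχ1 (show (0:ℕ) ≤ 2 by norm_num)
      simpa [pow_succ] using this
    have h2 : s * (χ * χ) * s ≤ s * 1 * s := conjugate_le_conjugate_of_nonneg hχ2 hs0
    have h3 : χ * (s * (χ * χ) * s) * χ ≤ χ * (s * 1 * s) * χ :=
      conjugate_le_conjugate_of_nonneg h2 hχ0
    calc (χ * s * χ) * (χ * s * χ) = χ * (s * (χ * χ) * s) * χ := by noncomm_ring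
      _ ≤ χ * (s * 1 * s) * χ := h3
      _ = χ * γ * χ := by rw [mul_one, hs, CFC.sqrt_mul_sqrt_self γ hγ0]
  have hsq0 : 0 ≤ (χ * s * χ) * (χ * s * χ) := by
    have := star_mul_self_nonneg (χ * s * χ)
    rwa [(IsSelfAdjoint.of_nonneg hd0).star_eq] at this
  calc χ * s * χ = CFC.sqrt ((χ * s * χ) * (χ * s * χ)) :=
        (CFC.sqrt_mul_self _ hd0).symm
    _ ≤ CFC.sqrt (χ * γ * χ) := mySqrtMono hsq0 hsq
end

section
/- Let H be a complex Hilbert space, let χ and η be bounded self-adjoint operators on H with 0 ≤ χ ≤ 1 and 0 ≤ η, and let z > 0 be a real number. Then the operators χηχ + z·1 and η + z·1 are invertible and χ (χηχ + z·1)^{-1} χ ≤ (η + z·1)^{-1} in the Loewner order. -/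
open CFC NNReal
set_option maxHeartbeats 1000000
set_option synthInstance.maxHeartbeats 400000

/-- **Resolvent inequality in the Loewner order.**
If `χ, η` are bounded self-adjoint operators on a complex Hilbert space `H` with
`0 ≤ χ ≤ 1` and `0 ≤ η` (Loewner order), and `z > 0`, then `χηχ + z·1` and `η + z·1` are
invertible and `χ (χηχ + z·1)⁻¹ χ ≤ (η + z·1)⁻¹`. -/
theorem chi_resolvent_chi_le {H : Type*} [NormedAddCommGroup H] [InnerProductSpace ℂ H]
    [CompleteSpace H] (χ η : H →L[ℂ] H)
    (hχsa : IsSelfAdjoint χ) (hηsa : IsSelfAdjoint η)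
    (hχ0 : (0 : H →L[ℂ] H) ≤ χ) (hχ1 : χ ≤ 1) (hη0 : (0 : H →L[ℂ] H) ≤ η)
    (z : ℝ) (hz : 0 < z) :
    IsUnit (χ * η * χ + z • (1 : H →L[ℂ] H)) ∧ IsUnit (η + z • (1 : H →L[ℂ] H)) ∧
      χ * Ring.inverse (χ * η * χ + z • (1 : H →L[ℂ] H)) * χ ≤
        Ring.inverse (η + z • (1 : H →L[ℂ] H)) := by
  have hsmul : ∀ (r : ℝ) (c : H →L[ℂ] H), 0 ≤ r → 0 ≤ c → 0 ≤ r • c := by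
    intro r c hr hc
    have h := star_left_conjugate_nonneg hc ((Real.sqrt r) • 1)
    have h2 : star ((Real.sqrt r) • (1 : H →L[ℂ] H)) * c * ((Real.sqrt r) • 1) = r • c := by
      simp [star_smul, smul_mul_assoc, mul_smul_comm, smul_smul, Real.mul_self_sqrt hr]
    rwa [h2] at h
  have hz1 : (0 : H →L[ℂ] H) ≤ z • 1 := hsmul z 1 hz.le zero_le_one
  have hz1u : IsUnit (z • (1 : H →L[ℂ] H)) := by
    rw [← Algebra.algebraMap_eq_smul_one]
    exact (isUnit_iff_ne_zero.mpr hz.ne').map (algebraMap ℝ (H →L[ℂ] H))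
  have hconj : (0 : H →L[ℂ] H) ≤ χ * η * χ := by
    simpa [hχsa.star_eq] using star_left_conjugate_nonneg hη0 χ
  have hzA : z • (1 : H →L[ℂ] H) ≤ χ * η * χ + z • 1 := le_add_of_nonneg_left hconj
  have hzB : z • (1 : H →L[ℂ] H) ≤ η + z • 1 := le_add_of_nonneg_left hη0
  have hAu : IsUnit (χ * η * χ + z • (1 : H →L[ℂ] H)) :=
    CStarAlgebra.isUnit_of_le _ hzA (hz1u.isStrictlyPositive hz1)
  have hBu : IsUnit (η + z • (1 : H →L[ℂ] H)) := CStarAlgebra.isUnit_of_le _ hzB (hz1u.isStrictlyPositive hz1)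
  refine ⟨hAu, hBu, ?_⟩
  obtain ⟨a, ha⟩ := hAu
  obtain ⟨b, hb⟩ := hBu
  have hA0 : (0 : H →L[ℂ] H) ≤ (a : H →L[ℂ] H) := ha ▸ hz1.trans hzA
  have hB0 : (0 : H →L[ℂ] H) ≤ (b : H →L[ℂ] H) := hb ▸ hz1.trans hzB
  rw [← ha, ← hb, Ring.inverse_unit a, Ring.inverse_unit b]
  -- χ * χ ≤ 1
  have hχχ0 : (0 : H →L[ℂ] H) ≤ χ * χ := by
    simpa [hχsa.star_eq] using star_mul_self_nonneg χ
  have hχn : ‖χ‖ ≤ 1 := (CStarAlgebra.norm_le_one_iff_of_nonneg χ hχ0).mpr hχ1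
  have hχ2 : χ * χ ≤ 1 := by
    rw [← CStarAlgebra.norm_le_one_iff_of_nonneg _ hχχ0]
    calc ‖χ * χ‖ ≤ ‖χ‖ * ‖χ‖ := norm_mul_le _ _
      _ ≤ 1 := by nlinarith [norm_nonneg χ]
  have hkey : χ * (b : H →L[ℂ] H) * χ ≤ (a : H →L[ℂ] H) := by
    have h1 : χ * (b : H →L[ℂ] H) * χ = χ * η * χ + z • (χ * χ) := by
      rw [hb]; simp [mul_add, add_mul, mul_smul_comm, smul_mul_assoc]
    have h2 : z • (χ * χ) ≤ z • (1 : H →L[ℂ] H) := by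
      rw [← sub_nonneg, ← smul_sub]
      exact hsmul z _ hz.le (by rwa [sub_nonneg])
    rw [h1, ha]
    exact add_le_add_right h2 _
  -- square roots and inverse powers
  have haspec : (0 : ℝ≥0) ∉ spectrum ℝ≥0 (a : H →L[ℂ] H) := a.zero_notMem_spectrum ℝ≥0
  have hbspec : (0 : ℝ≥0) ∉ spectrum ℝ≥0 (b : H →L[ℂ] H) := b.zero_notMem_spectrum ℝ≥0
  set am : H →L[ℂ] H := (a : H →L[ℂ] H) ^ (-(1/2) : ℝ) with ham_def
  set bm : H →L[ℂ] H := (b : H →L[ℂ] H) ^ (-(1/2) : ℝ) with hbm_def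
  have ham0 : (0 : H →L[ℂ] H) ≤ am := rpow_nonneg
  have hbm0 : (0 : H →L[ℂ] H) ≤ bm := rpow_nonneg
  have hamsa : IsSelfAdjoint am := .of_nonneg ham0
  have hbmsa : IsSelfAdjoint bm := .of_nonneg hbm0
  set s : H →L[ℂ] H := sqrt (b : H →L[ℂ] H) with hs_def
  have hs0 : (0 : H →L[ℂ] H) ≤ s := sqrt_nonneg _
  have hssa : IsSelfAdjoint s := .of_nonneg hs0
  set T : H →L[ℂ] H := am * χ * s with hT_def
  have hTstar : star T = s * χ * am := by
    simp [hT_def, star_mul, hssa.star_eq, hχsa.star_eq, hamsa.star_eq, mul_assoc]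
  have hTT : T * star T ≤ 1 := by
    have h2 : am * (χ * (b : H →L[ℂ] H) * χ) * am ≤ am * (a : H →L[ℂ] H) * am :=
      hamsa.conjugate_le_conjugate hkey
    have h3 : am * (a : H →L[ℂ] H) * am = 1 :=
      CFC.conjugate_rpow_neg_one_half (a : H →L[ℂ] H) (a.isUnit.isStrictlyPositive hA0)
    calc T * star T = am * (χ * (s * s) * χ) * am := by
          rw [hTstar, hT_def]; noncomm_ring
      _ = am * (χ * (b : H →L[ℂ] H) * χ) * am := by
          rw [hs_def, sqrt_mul_sqrt_self _ hB0]
      _ ≤ am * (a : H →L[ℂ] H) * am := h2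
      _ = 1 := h3
  have hTT0 : (0 : H →L[ℂ] H) ≤ T * star T := mul_star_self_nonneg T
  have hnT : ‖T‖ * ‖T‖ ≤ 1 := by
    have := (CStarAlgebra.norm_le_one_iff_of_nonneg _ hTT0).mpr hTT
    rwa [CStarRing.norm_self_mul_star] at this
  have hsTT : star T * T ≤ 1 := by
    rw [← CStarAlgebra.norm_le_one_iff_of_nonneg _ (star_mul_self_nonneg T),
      CStarRing.norm_star_mul_self]
    exact hnT
  have hamam : am * am = ((a⁻¹ : (H →L[ℂ] H)ˣ) : H →L[ℂ] H) := by
    rw [ham_def, ← CFC.rpow_add a.isUnit]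
    norm_num
    exact CFC.rpow_neg_one_eq_inv a hA0
  have hsTTeq : star T * T = s * (χ * ((a⁻¹ : (H →L[ℂ] H)ˣ) : H →L[ℂ] H) * χ) * s := by
    rw [hTstar, hT_def, ← hamam]; noncomm_ring
  rw [hsTTeq] at hsTT
  have h4 : bm * (s * (χ * ((a⁻¹ : (H →L[ℂ] H)ˣ) : H →L[ℂ] H) * χ) * s) * bm ≤ bm * 1 * bm :=
    hbmsa.conjugate_le_conjugate hsTT
  have hbms : bm * s = 1 := by
    rw [hbm_def, hs_def, CFC.sqrt_eq_rpow, ← CFC.rpow_add b.isUnit]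
    norm_num
    exact CFC.rpow_zero _ hB0
  have hsbm : s * bm = 1 := by
    rw [hbm_def, hs_def, CFC.sqrt_eq_rpow, ← CFC.rpow_add b.isUnit]
    norm_num
    exact CFC.rpow_zero _ hB0
  have hbmbm : bm * bm = ((b⁻¹ : (H →L[ℂ] H)ˣ) : H →L[ℂ] H) := by
    rw [hbm_def, ← CFC.rpow_add b.isUnit]
    norm_num
    exact CFC.rpow_neg_one_eq_inv b hB0
  calc χ * ((a⁻¹ : (H →L[ℂ] H)ˣ) : H →L[ℂ] H) * χ
      = bm * (s * (χ * ((a⁻¹ : (H →L[ℂ] H)ˣ) : H →L[ℂ] H) * χ) * s) * bm := by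
        have h5 : bm * (s * (χ * ((a⁻¹ : (H →L[ℂ] H)ˣ) : H →L[ℂ] H) * χ) * s) * bm
            = (bm * s) * (χ * ((a⁻¹ : (H →L[ℂ] H)ˣ) : H →L[ℂ] H) * χ) * (s * bm) := by
          noncomm_ring
        rw [h5, hbms, hsbm, one_mul, mul_one]
    _ ≤ bm * 1 * bm := h4
    _ = ((b⁻¹ : (H →L[ℂ] H)ˣ) : H →L[ℂ] H) := by rw [mul_one, hbmbm]
end

section
/- Let H be a complex Hilbert space, let C be a positive bounded self-adjoint operator on H, and let q ∈ (1, 2). Then there is a constant c_q > 0, depending only on q (namely c_q = sin(π(q−1))/π), such that C^q = c_q · ∫₀^∞ C² (C + z·1)^{-1} z^{q−2} dz, where the integral is a Bochner integral in the space of bounded operators on H with the operator norm (note that C + z·1 is invertible for every z > 0 and the integrand has operator norm at most min(‖C‖^q · z^{q−2}, ‖C‖² · z^{q−3}), so it is Bochner integrable). -/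
open MeasureTheory

open Set Real


section scalar

lemma beta_aux' {s : ℝ} (hs0 : 0 < s) (hs1 : s < 1) :
    ∫ x in Ioo (0:ℝ) 1, x ^ (s-1) * (1-x) ^ (-s) = π / Real.sin (π * s) := by
  have h1s : 0 < 1 - s := by linarith
  have key : Complex.betaIntegral s (1 - s)
      = ((∫ x in Ioo (0:ℝ) 1, x ^ (s-1) * (1-x) ^ (-s) : ℝ) : ℂ) := by
    rw [Complex.betaIntegral, intervalIntegral.integral_of_le zero_le_one,
      ← MeasureTheory.integral_Ioc_eq_integral_Ioo (f := fun x : ℝ => x ^ (s-1) * (1-x) ^ (-s))]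
    rw [show (∫ x in Ioc (0:ℝ) 1, (x:ℂ) ^ ((s:ℂ)-1) * (1-(x:ℂ)) ^ ((1:ℂ)-(s:ℂ)-1))
        = ∫ x in Ioc (0:ℝ) 1, ((x ^ (s-1) * (1-x) ^ (-s) : ℝ) : ℂ) from ?_]
    · exact integral_ofReal
    refine setIntegral_congr_fun measurableSet_Ioc fun x hx => ?_
    obtain ⟨hx0, hx1⟩ := hx
    rw [Complex.ofReal_mul, Complex.ofReal_cpow hx0.le, Complex.ofReal_cpow (by linarith)]
    push_cast
    ring_nf
  have hgg := Complex.Gamma_mul_Gamma_eq_betaIntegral (s := s) (t := 1 - s)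
    (by simpa using hs0) (by simpa using h1s)
  rw [show (s:ℂ) + (1 - s) = 1 by ring, Complex.Gamma_one, one_mul, key] at hgg
  have : ((Real.Gamma s * Real.Gamma (1 - s) : ℝ) : ℂ)
      = ((∫ x in Ioo (0:ℝ) 1, x ^ (s-1) * (1-x) ^ (-s) : ℝ) : ℂ) := by
    rw [← hgg, Complex.ofReal_mul, Complex.Gamma_ofReal,
      show (1 - (s:ℂ)) = ((1 - s : ℝ) : ℂ) by push_cast; ring, Complex.Gamma_ofReal]
  have h2 := Complex.ofReal_injective this
  rw [← h2, Real.Gamma_mul_Gamma_one_sub]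

lemma mellin_one_add_aux' {s : ℝ} (hs0 : 0 < s) (hs1 : s < 1) :
    ∫ z in Ioi (0:ℝ), z ^ (s-1) / (1+z) = π / Real.sin (π * s) := by
  have himg : (fun x : ℝ => x / (1 - x)) '' Ioo 0 1 = Ioi 0 := by
    ext t
    constructor
    · rintro ⟨x, ⟨hx0, hx1⟩, rfl⟩
      exact div_pos hx0 (by linarith)
    · intro ht
      refine ⟨t / (1 + t), ⟨div_pos ht (by linarith [(mem_Ioi.mp ht).le]), ?_⟩, ?_⟩
      · rw [div_lt_one (by linarith [mem_Ioi.mp ht])]; linarith [mem_Ioi.mp ht]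
      · have h1t : (1:ℝ) + t ≠ 0 := by have := mem_Ioi.mp ht; positivity
        field_simp
        ring
  have hderiv : ∀ x ∈ Ioo (0:ℝ) 1, HasDerivWithinAt (fun x : ℝ => x / (1 - x))
      (1 / (1 - x) ^ 2) (Ioo 0 1) x := by
    intro x hx
    have h1x : (1:ℝ) - x ≠ 0 := by have := hx.2; intro h; simp [sub_eq_zero] at h; linarith
    have := (hasDerivAt_id x).div ((hasDerivAt_id x).const_sub 1) h1x
    have e : (1:ℝ) / (1 - x) ^ 2 = (1 * (1 - id x) - id x * -1) / (1 - id x) ^ 2 := by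
      simp only [id]; ring
    rw [e]; exact this.hasDerivWithinAt
  have hinj : Set.InjOn (fun x : ℝ => x / (1 - x)) (Ioo 0 1) := by
    intro a ha b hb hab
    have h1a : (1:ℝ) - a ≠ 0 := by have := ha.2; intro h; simp [sub_eq_zero] at h; linarith
    have h1b : (1:ℝ) - b ≠ 0 := by have := hb.2; intro h; simp [sub_eq_zero] at h; linarith
    field_simp at hab
    linarith
  have := MeasureTheory.integral_image_eq_integral_abs_deriv_smul measurableSet_Ioo hderiv hinj
      (fun z : ℝ => z ^ (s-1) / (1+z))
  rw [himg] at this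
  rw [this, ← beta_aux' hs0 hs1]
  refine setIntegral_congr_fun measurableSet_Ioo fun x hx => ?_
  obtain ⟨hx0, hx1⟩ := hx
  have h1x : (0:ℝ) < 1 - x := by linarith
  have hfx : (1:ℝ) + x / (1 - x) = (1 - x)⁻¹ := by field_simp; ring
  rw [smul_eq_mul, hfx, abs_of_pos (by positivity)]
  rw [Real.div_rpow hx0.le h1x.le]
  rw [Real.rpow_sub_one h1x.ne', Real.rpow_sub_one hx0.ne']
  have hxs : x ^ s ≠ 0 := by positivity
  have h1xs : (1-x) ^ s ≠ 0 := by positivity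
  rw [Real.rpow_neg h1x.le]
  field_simp

lemma resolvent_scalar_aux' {s : ℝ} (hs0 : 0 < s) (hs1 : s < 1) {x : ℝ} (hx : 0 < x) :
    ∫ z in Ioi (0:ℝ), z ^ (s-1) / (x+z) = (π / Real.sin (π * s)) * x ^ (s-1) := by
  have h := integral_comp_mul_left_Ioi (fun z : ℝ => z ^ (s-1) / (x+z)) 0 hx
  rw [mul_zero] at h
  have hcongr : ∫ t in Ioi (0:ℝ), (fun z : ℝ => z ^ (s-1) / (x+z)) (x * t)
      = ∫ t in Ioi (0:ℝ), x ^ (s-2) * (t ^ (s-1) / (1+t)) := by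
    refine setIntegral_congr_fun measurableSet_Ioi fun t ht => ?_
    have ht0 : (0:ℝ) < t := ht
    simp only
    rw [Real.mul_rpow hx.le ht0.le, show x + x * t = x * (1+t) by ring,
      Real.rpow_sub_one hx.ne', Real.rpow_sub hx s 2]
    have h1t : (0:ℝ) < 1 + t := by linarith
    rw [Real.rpow_two]
    field_simp
  rw [hcongr, MeasureTheory.integral_const_mul, mellin_one_add_aux' hs0 hs1] at h
  rw [smul_eq_mul, eq_comm, inv_mul_eq_iff_eq_mul₀ hx.ne'] at h
  rw [h, show s - 1 = (s-2) + 1 by ring, Real.rpow_add hx, Real.rpow_one]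
  ring

end scalar

section op

variable {H : Type*} [NormedAddCommGroup H] [InnerProductSpace ℂ H] [CompleteSpace H]

lemma cfc_integrand_aux (C : H →L[ℂ] H) (hCsa : IsSelfAdjoint C)
    (hC0 : (0 : H →L[ℂ] H) ≤ C) (q : ℝ) (z : ℝ) (hz : 0 < z) :
    z ^ (q-2) • (C^2 * Ring.inverse (C + z • (1 : H →L[ℂ] H)))
      = cfc (fun x : ℝ => x^2 * (z ^ (q-2) / (x + z))) C := by
  have hne : ∀ x ∈ spectrum ℝ C, x + z ≠ 0 := fun x hx => by
    have := spectrum_nonneg_of_nonneg hC0 hx; intro h; linarith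
  have hcinv : ContinuousOn (fun x : ℝ => (x + z)⁻¹) (spectrum ℝ C) :=
    ContinuousOn.inv₀ (by fun_prop) hne
  have hcmul : ContinuousOn (fun x : ℝ => x^2 * (x + z)⁻¹) (spectrum ℝ C) :=
    (continuous_pow 2).continuousOn.mul hcinv
  have h1 : cfc (fun x : ℝ => x + z) C = C + z • 1 := by
    have := cfc_add_const z (id : ℝ → ℝ) C (by fun_prop)
    simpa [Algebra.algebraMap_eq_smul_one, cfc_id ℝ C] using this
  have h2 : Ring.inverse (C + z • (1 : H →L[ℂ] H)) = cfc (fun x : ℝ => (x + z)⁻¹) C := by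
    rw [← h1, ← cfc_inv (fun x : ℝ => x + z) C hne (by fun_prop)]
  have h3 : cfc (fun x : ℝ => x^2 * (z ^ (q-2) / (x + z))) C
      = z ^ (q-2) • cfc (fun x : ℝ => x^2 * (x + z)⁻¹) C := by
    rw [← cfc_smul (z ^ (q-2)) (fun x : ℝ => x^2 * (x + z)⁻¹) C hcmul]
    exact cfc_congr fun x _ => by simp [smul_eq_mul]; ring
  rw [h3, h2, cfc_mul (fun x : ℝ => x^2) (fun x : ℝ => (x+z)⁻¹) C (by fun_prop) hcinv,
    cfc_pow_id C 2]

end op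

set_option maxHeartbeats 2000000 in
/-- **Integral representation of operator powers `C^q`, `q ∈ (1, 2)`.**
For a positive bounded self-adjoint operator `C` on a complex Hilbert space and `q ∈ (1, 2)`,
with the constant `c_q = sin(π(q−1))/π > 0` one has
`C^q = c_q ∫₀^∞ C² (C + z·1)⁻¹ z^{q−2} dz` (a Bochner integral in the operator norm);
moreover `C + z·1` is invertible for every `z > 0` and the integrand is Bochner integrable. -/
theorem cfc_rpow_eq_integral_resolvent {H : Type*} [NormedAddCommGroup H]
    [InnerProductSpace ℂ H] [CompleteSpace H] (C : H →L[ℂ] H)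
    (hCsa : IsSelfAdjoint C) (hC0 : (0 : H →L[ℂ] H) ≤ C)
    (q : ℝ) (hq : q ∈ Set.Ioo (1 : ℝ) 2) :
    0 < Real.sin (Real.pi * (q - 1)) / Real.pi ∧
    (∀ z : ℝ, 0 < z → IsUnit (C + z • (1 : H →L[ℂ] H))) ∧
    IntegrableOn
      (fun z : ℝ => z ^ (q - 2) • (C ^ 2 * Ring.inverse (C + z • (1 : H →L[ℂ] H))))
      (Set.Ioi 0) volume ∧
    cfc (fun x : ℝ => x ^ q) C =
      (Real.sin (Real.pi * (q - 1)) / Real.pi) •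
        ∫ z in Set.Ioi (0 : ℝ),
          z ^ (q - 2) • (C ^ 2 * Ring.inverse (C + z • (1 : H →L[ℂ] H))) := by
  obtain ⟨hq1, hq2⟩ := hq
  have hsin : 0 < Real.sin (π * (q - 1)) :=
    Real.sin_pos_of_pos_of_lt_pi (mul_pos Real.pi_pos (by linarith))
      ((mul_lt_iff_lt_one_right Real.pi_pos).mpr (by linarith))
  have hc : 0 < Real.sin (π * (q - 1)) / π := div_pos hsin Real.pi_pos
  rcases subsingleton_or_nontrivial H with hH | hH
  · refine ⟨hc, fun z _ => isUnit_of_subsingleton _, ?_, Subsingleton.elim _ _⟩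
    rw [show (fun z : ℝ => z ^ (q - 2) • (C ^ 2 * Ring.inverse (C + z • (1 : H →L[ℂ] H))))
      = (fun _ : ℝ => (0 : H →L[ℂ] H)) from funext fun _ => Subsingleton.elim _ _]
    exact integrableOn_zero
  -- main case
  set S := spectrum ℝ C with hS
  have hSnn : ∀ x ∈ S, (0:ℝ) ≤ x := fun x hx => spectrum_nonneg_of_nonneg hC0 hx
  have hSle : ∀ x ∈ S, x ≤ ‖C‖ := fun x hx =>
    (le_abs_self x).trans (spectrum.norm_le_norm_of_mem hx)
  -- the scalar integrand, totally defined
  set f : ℝ → ℝ → ℝ := fun z x => x ^ 2 * (|z| ^ (q-2) / (x + |z|)) with hf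
  have hf₁ : ∀ z : ℝ, ContinuousOn (f z) S := by
    intro z
    rcases eq_or_ne z 0 with rfl | hz
    · simp only [hf, abs_zero, Real.zero_rpow (by intro h; linarith : q - 2 ≠ 0), zero_div,
        mul_zero]
      exact continuousOn_const
    · have hne : ∀ x ∈ S, x + |z| ≠ 0 := fun x hx => by
        have h1 := hSnn x hx
        have h2 : 0 < |z| := abs_pos.mpr hz
        positivity
      exact (continuous_pow 2).continuousOn.mul
        (continuousOn_const.div (by fun_prop) hne)
  set fc : ℝ → C(S, ℝ) := fun z => ⟨_, (hf₁ z).restrict⟩ with hfc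
  -- continuity of `fc` on `Ioi 0`
  have hfc_cont : ContinuousOn fc (Ioi (0:ℝ)) := by
    rw [continuousOn_iff_continuous_restrict]
    have hG : Continuous fun p : ↥(Ioi (0:ℝ)) × ↥S => f p.1.val p.2.val := by
      refine continuous_iff_continuousAt.mpr fun p => ?_
      have hz : (0:ℝ) < p.1.val := p.1.2
      have hx : (0:ℝ) ≤ p.2.val := hSnn _ p.2.2
      have hzc : ContinuousAt (fun p : ↥(Ioi (0:ℝ)) × ↥S => |p.1.val|) p :=
        (continuous_abs.comp (continuous_subtype_val.comp continuous_fst)).continuousAt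
      have hrc : ContinuousAt (fun p : ↥(Ioi (0:ℝ)) × ↥S => |p.1.val| ^ (q-2)) p :=
        ContinuousAt.comp (Real.continuousAt_rpow_const _ _
          (Or.inl (by positivity))) hzc
      have hxc : ContinuousAt (fun p : ↥(Ioi (0:ℝ)) × ↥S => p.2.val) p :=
        (continuous_subtype_val.comp continuous_snd).continuousAt
      have hden : ContinuousAt (fun p : ↥(Ioi (0:ℝ)) × ↥S => p.2.val + |p.1.val|) p :=
        hxc.add hzc
      have hdne : p.2.val + |p.1.val| ≠ 0 := by
        have : (0:ℝ) < |p.1.val| := abs_pos.mpr hz.ne'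
        positivity
      exact ((hxc.pow 2).mul (hrc.div hden hdne))
    let G : C(↥(Ioi (0:ℝ)) × ↥S, ℝ) := ⟨_, hG⟩
    have : (Ioi (0:ℝ)).domRestrict fc = fun z => G.curry z := by
      funext z; ext x; rfl
    rw [this]
    exact G.curry.continuous
  -- integrability of `fc`
  have hM : (0:ℝ) ≤ ‖C‖ := norm_nonneg C
  have hbnd1 : ∀ z : ℝ, 0 < z → ‖fc z‖ ≤ ‖C‖ * z ^ (q-2) := by
    intro z hz
    refine (ContinuousMap.norm_le _ (by positivity)).mpr fun x => ?_
    have hx0 := hSnn x.val x.2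
    have hxM := hSle x.val x.2
    have hxz : (0:ℝ) < x.val + z := by linarith
    simp only [hfc, hf, ContinuousMap.coe_mk, Set.restrict_apply, abs_of_pos hz]
    rw [Real.norm_eq_abs, abs_of_nonneg (by positivity)]
    have h1 : x.val ^ 2 / (x.val + z) ≤ x.val := by
      rw [div_le_iff₀ hxz]; nlinarith
    calc x.val ^ 2 * (z ^ (q-2) / (x.val + z))
        = z ^ (q-2) * (x.val ^ 2 / (x.val + z)) := by ring
      _ ≤ z ^ (q-2) * x.val := by
          exact mul_le_mul_of_nonneg_left h1 (by positivity)
      _ ≤ ‖C‖ * z ^ (q-2) := by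
          rw [mul_comm]; exact mul_le_mul_of_nonneg_right hxM (by positivity)
  have hbnd2 : ∀ z : ℝ, 1 < z → ‖fc z‖ ≤ ‖C‖ ^ 2 * z ^ (q-3) := by
    intro z hz
    have hz0 : (0:ℝ) < z := by linarith
    refine (ContinuousMap.norm_le _ (by positivity)).mpr fun x => ?_
    have hx0 := hSnn x.val x.2
    have hxM := hSle x.val x.2
    have hxz : (0:ℝ) < x.val + z := by linarith
    simp only [hfc, hf, ContinuousMap.coe_mk, Set.restrict_apply, abs_of_pos hz0]
    rw [Real.norm_eq_abs, abs_of_nonneg (by positivity)]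
    have h1 : x.val ^ 2 * (z ^ (q-2) / (x.val + z)) ≤ x.val ^ 2 * (z ^ (q-2) / z) := by
      refine mul_le_mul_of_nonneg_left ?_ (by positivity)
      exact div_le_div_of_nonneg_left (by positivity) hz0 (by linarith)
    have h2 : z ^ (q-2) / z = z ^ (q-3) := by
      rw [show q - 3 = q - 2 - 1 by ring, Real.rpow_sub_one hz0.ne']
    calc x.val ^ 2 * (z ^ (q-2) / (x.val + z)) ≤ x.val ^ 2 * (z ^ (q-2) / z) := h1
      _ = x.val ^ 2 * z ^ (q-3) := by rw [h2]
      _ ≤ ‖C‖ ^ 2 * z ^ (q-3) := by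
          refine mul_le_mul_of_nonneg_right ?_ (by positivity)
          exact pow_le_pow_left₀ hx0 hxM 2
  have hI : IntegrableOn fc (Ioi (0:ℝ)) volume := by
    rw [← Set.Ioc_union_Ioi_eq_Ioi (zero_le_one (α := ℝ))]
    refine IntegrableOn.union ?_ ?_
    · refine Integrable.mono'
        (((intervalIntegral.intervalIntegrable_rpow' (a := 0) (b := 1) (r := q-2) (by linarith)).1).const_mul ‖C‖)
        ((hfc_cont.mono Ioc_subset_Ioi_self).aestronglyMeasurable measurableSet_Ioc) ?_
      exact (ae_restrict_iff' measurableSet_Ioc).mpr (ae_of_all _ fun z hz => hbnd1 z hz.1)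
    · refine Integrable.mono'
        ((integrableOn_Ioi_rpow_of_lt (a := q-3) (by linarith) one_pos).const_mul (‖C‖ ^ 2))
        ((hfc_cont.mono (Ioi_subset_Ioi zero_le_one)).aestronglyMeasurable
          measurableSet_Ioi) ?_
      exact (ae_restrict_iff' measurableSet_Ioi).mpr (ae_of_all _ fun z hz => hbnd2 z hz)
  -- the integrand equals `cfcL` applied to `fc`
  have hkey : ∀ z ∈ Ioi (0:ℝ),
      z ^ (q - 2) • (C ^ 2 * Ring.inverse (C + z • (1 : H →L[ℂ] H)))
        = cfcL (a := C) (R := ℝ) hCsa (fc z) := by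
    intro z hz
    have hz0 : (0:ℝ) < z := hz
    rw [cfc_integrand_aux C hCsa hC0 q z hz0]
    rw [cfc_apply (fun x : ℝ => x^2 * (z ^ (q-2) / (x + z))) C hCsa
      (by
        have hne : ∀ x ∈ S, x + z ≠ 0 := fun x hx => by
          have := hSnn x hx; intro h; linarith
        exact (continuous_pow 2).continuousOn.mul (continuousOn_const.div (by fun_prop) hne))]
    rw [cfcL_apply]
    refine congrArg _ (ContinuousMap.ext fun x => ?_)
    simp [hfc, hf, abs_of_pos hz0]
  have hIL : Integrable (fun z => cfcL (a := C) (R := ℝ) hCsa (fc z))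
      (volume.restrict (Ioi (0:ℝ))) :=
    (cfcL (a := C) (R := ℝ) hCsa).integrable_comp hI
  have hInt : IntegrableOn
      (fun z : ℝ => z ^ (q - 2) • (C ^ 2 * Ring.inverse (C + z • (1 : H →L[ℂ] H))))
      (Set.Ioi 0) volume := by
    refine hIL.congr ?_
    exact (ae_restrict_iff' measurableSet_Ioi).mpr (ae_of_all _ fun z hz => (hkey z hz).symm)
  refine ⟨hc, ?_, hInt, ?_⟩
  · intro z hz
    have hne : ∀ x ∈ S, x + z ≠ 0 := fun x hx => by
      have := hSnn x hx; intro h; linarith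
    have h1 : cfc (fun x : ℝ => x + z) C = C + z • 1 := by
      have := cfc_add_const z (id : ℝ → ℝ) C (by fun_prop)
      simpa [Algebra.algebraMap_eq_smul_one, cfc_id ℝ C] using this
    rw [← h1]
    exact isUnit_cfc (fun x : ℝ => x + z) C (by fun_prop) hCsa hne
  -- the main identity
  have hq0 : (0:ℝ) < q := by linarith
  have hcontq : ContinuousOn (fun x : ℝ => x ^ q) S :=
    (continuous_iff_continuousAt.mpr fun x =>
      Real.continuousAt_rpow_const x q (Or.inr hq0.le)).continuousOn
  have hcontIq : ContinuousOn (fun x : ℝ => (π / Real.sin (π * (q-1))) * x ^ q) S :=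
    continuousOn_const.mul hcontq
  have hIv : (∫ z in Ioi (0:ℝ), fc z) =
      ⟨S.restrict (fun x : ℝ => (π / Real.sin (π * (q-1))) * x ^ q), hcontIq.restrict⟩ := by
    refine ContinuousMap.ext fun x => ?_
    rw [ContinuousMap.integral_apply hI]
    have hx0 := hSnn x.val x.2
    simp only [hfc, hf, ContinuousMap.coe_mk, Set.restrict_apply]
    rcases eq_or_lt_of_le hx0 with hx | hx
    · rw [show (∫ z in Ioi (0:ℝ), (x.val) ^ 2 * (|z| ^ (q-2) / (x.val + |z|)))
        = ∫ z in Ioi (0:ℝ), (0:ℝ) from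
          setIntegral_congr_fun measurableSet_Ioi fun z hz => by
            rw [← hx]; simp]
      simp [← hx, Real.zero_rpow hq0.ne', Set.domRestrict_apply]
      show (0:ℝ) = π / Real.sin (π * (q-1)) * x.val ^ q
      rw [← hx, Real.zero_rpow hq0.ne', mul_zero]
    · have hcongr : (∫ z in Ioi (0:ℝ), (x.val) ^ 2 * (|z| ^ (q-2) / (x.val + |z|)))
          = ∫ z in Ioi (0:ℝ), (x.val) ^ 2 * (z ^ ((q-1)-1) / (x.val + z)) := by
        refine setIntegral_congr_fun measurableSet_Ioi fun z hz => ?_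
        rw [abs_of_pos hz, show (q-1)-1 = q-2 by ring]
      rw [hcongr, MeasureTheory.integral_const_mul,
        resolvent_scalar_aux' (by linarith) (by linarith) hx]
      rw [show (q-1)-1 = q-2 by ring, show x.val ^ 2 = x.val ^ (2:ℝ) by
        rw [← Real.rpow_natCast x.val 2]; norm_num]
      rw [← mul_assoc, mul_comm (x.val ^ (2:ℝ)), mul_assoc, ← Real.rpow_add hx]
      norm_num
      rfl
  have hfinal : (∫ z in Ioi (0:ℝ),
      z ^ (q - 2) • (C ^ 2 * Ring.inverse (C + z • (1 : H →L[ℂ] H))))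
      = (π / Real.sin (π * (q-1))) • cfc (fun x : ℝ => x ^ q) C := by
    rw [setIntegral_congr_fun measurableSet_Ioi hkey]
    rw [cfcL_integral C fc hI hCsa, hIv]
    have : (⟨S.restrict (fun x : ℝ => (π / Real.sin (π * (q-1))) * x ^ q), hcontIq.restrict⟩ :
        C(S, ℝ)) = ⟨_, hcontIq.restrict⟩ := rfl
    rw [show (cfcL (a := C) (R := ℝ) hCsa
        (⟨S.restrict (fun x : ℝ => (π / Real.sin (π * (q-1))) * x ^ q), hcontIq.restrict⟩ :
          C(S, ℝ)))
        = cfc (fun x : ℝ => (π / Real.sin (π * (q-1))) * x ^ q) C from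
      (cfc_apply _ C hCsa hcontIq).symm]
    rw [cfc_const_mul _ _ C hcontq]
  rw [hfinal, smul_smul, div_mul_div_comm, mul_comm (Real.sin (π * (q-1))),
    div_self (by positivity), one_smul]
end

section
/- (Fefferman–de la Llave representation of the Coulomb kernel.) For all x, y ∈ ℝ³ with x ≠ y, 1/|x − y| = (1/π) ∫₀^∞ r^{-5} · vol( B(x, r) ∩ B(y, r) ) dr, where B(z, r) denotes the open Euclidean ball of radius r centered at z and vol denotes three-dimensional Lebesgue measure. -/
open MeasureTheory Set Real


lemma slice_zero (d r : ℝ) (hd : 0 < d) (hr0 : 0 < r) (hr : r ≤ d/2) (t : ℝ) :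
    Real.pi * max 0 (r^2 - max (t^2) ((t-d)^2)) = 0 := by
  have hr2 : r^2 ≤ (d/2)^2 := by nlinarith
  have h : r^2 ≤ max (t^2) ((t-d)^2) := by
    rcases le_total (t^2) ((t-d)^2) with h | h
    · rw [max_eq_right h]; nlinarith [sq_nonneg (t - d/2)]
    · rw [max_eq_left h]; nlinarith [sq_nonneg (t - d/2)]
  rw [max_eq_left (by linarith), mul_zero]

lemma slice_indicator (d r : ℝ) (hd : 0 < d) (hr : d/2 < r) :
    (fun t : ℝ => Real.pi * max 0 (r^2 - max (t^2) ((t-d)^2))) =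
      Set.indicator (Set.Ioc (d - r) r) (fun t => Real.pi * (r^2 - max (t^2) ((t-d)^2))) := by
  funext t
  rcases le_or_gt t (d - r) with h1 | h1
  · rw [Set.indicator_of_notMem (by simp only [Set.mem_Ioc, not_and_or, not_lt]; left; exact h1)]
    have h2 : r^2 ≤ (t-d)^2 := by nlinarith
    rw [max_eq_left (by nlinarith [le_max_right (t^2) ((t-d)^2)]), mul_zero]
  · rcases le_or_gt t r with h2 | h2
    · rw [Set.indicator_of_mem (Set.mem_Ioc.mpr ⟨h1, h2⟩)]
      have h3 : max (t^2) ((t-d)^2) ≤ r^2 := by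
        apply max_le
        · nlinarith
        · nlinarith
      rw [max_eq_right (by linarith)]
    · rw [Set.indicator_of_notMem (by simp only [Set.mem_Ioc, not_and_or, not_le]; right; exact h2)]
      have h2 : r^2 ≤ t^2 := by nlinarith
      rw [max_eq_left (by nlinarith [le_max_left (t^2) ((t-d)^2)]), mul_zero]

lemma lens_integral (d r : ℝ) (hd : 0 < d) (hr : d/2 < r) :
    ∫ t : ℝ, Real.pi * max 0 (r^2 - max (t^2) ((t-d)^2)) =
      Real.pi * (4/3*r^3 - r^2*d + d^3/12) := by
  rw [slice_indicator d r hd hr, MeasureTheory.integral_indicator measurableSet_Ioc,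
    ← intervalIntegral.integral_of_le (by linarith)]
  have hsplit := intervalIntegral.integral_add_adjacent_intervals
    (a := d - r) (b := d/2) (c := r)
    (f := fun t => Real.pi * (r^2 - max (t^2) ((t-d)^2))) (μ := volume)
    (by apply Continuous.intervalIntegrable; fun_prop)
    (by apply Continuous.intervalIntegrable; fun_prop)
  rw [← hsplit]
  have e1 : ∫ t in (d-r)..(d/2), Real.pi * (r^2 - max (t^2) ((t-d)^2)) =
      ∫ t in (d-r)..(d/2), Real.pi * (r^2 - (t-d)^2) := by
    apply intervalIntegral.integral_congr
    intro t ht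
    rw [Set.uIcc_of_le (by linarith)] at ht
    have h : t ≤ d/2 := ht.2
    dsimp only
    rw [max_eq_right (by nlinarith)]
  have e2 : ∫ t in (d/2)..r, Real.pi * (r^2 - max (t^2) ((t-d)^2)) =
      ∫ t in (d/2)..r, Real.pi * (r^2 - t^2) := by
    apply intervalIntegral.integral_congr
    intro t ht
    rw [Set.uIcc_of_le (by linarith)] at ht
    have h : d/2 ≤ t := ht.1
    dsimp only
    rw [max_eq_left (by nlinarith)]
  have i1 : ∫ t in (d-r)..(d/2), Real.pi * (r^2 - (t-d)^2) =
      (Real.pi * (r^2*(d/2) - (d/2-d)^3/3)) - (Real.pi * (r^2*(d-r) - ((d-r)-d)^3/3)) := by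
    apply intervalIntegral.integral_eq_sub_of_hasDerivAt
      (f := fun u => Real.pi * (r^2*u - (u-d)^3/3))
    · intro t ht
      have h1 : HasDerivAt (fun u : ℝ => (u - d)^3) (3*(t-d)^2) t := by
        simpa using ((hasDerivAt_id t).sub_const d).fun_pow 3
      have h2 := (((hasDerivAt_id t).const_mul (r^2)).sub (h1.div_const 3)).const_mul Real.pi
      convert! h2 using 1
      ring
    · apply Continuous.intervalIntegrable; fun_prop
  have i2 : ∫ t in (d/2)..r, Real.pi * (r^2 - t^2) =
      (Real.pi * (r^2*r - r^3/3)) - (Real.pi * (r^2*(d/2) - (d/2)^3/3)) := by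
    apply intervalIntegral.integral_eq_sub_of_hasDerivAt
      (f := fun u => Real.pi * (r^2*u - u^3/3))
    · intro t ht
      have h1 : HasDerivAt (fun u : ℝ => u^3) (3*t^2) t := by
        simpa using (hasDerivAt_id t).fun_pow 3
      have h2 := (((hasDerivAt_id t).const_mul (r^2)).sub (h1.div_const 3)).const_mul Real.pi
      convert! h2 using 1
      ring
    · apply Continuous.intervalIntegrable; fun_prop
  rw [e1, e2, i1, i2]
  ring


lemma ofReal_pi_max (c : ℝ) :
    ENNReal.ofReal (Real.pi * c) = ENNReal.ofReal (Real.pi * max 0 c) := by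
  rcases le_or_gt c 0 with h | h
  · rw [max_eq_left h, mul_zero, ENNReal.ofReal_zero, ENNReal.ofReal_eq_zero]
    nlinarith [Real.pi_pos]
  · rw [max_eq_right h.le]

lemma vol_disk (c : ℝ) :
    volume {w : Fin 2 → ℝ | w 0 ^ 2 + w 1 ^ 2 < c} = ENNReal.ofReal (Real.pi * c) := by
  rcases le_or_gt c 0 with hc | hc
  · have h1 : {w : Fin 2 → ℝ | w 0 ^ 2 + w 1 ^ 2 < c} = ∅ := by
      ext w; simp only [mem_setOf_eq, mem_empty_iff_false, iff_false, not_lt]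
      nlinarith [sq_nonneg (w 0), sq_nonneg (w 1)]
    rw [h1, measure_empty, Eq.comm, ENNReal.ofReal_eq_zero]
    nlinarith [Real.pi_pos]
  · have hR : (0:ℝ) ≤ Real.sqrt c := Real.sqrt_nonneg c
    have hball := EuclideanSpace.ball_zero_eq (n := Fin 2) (Real.sqrt c) hR
    have h2 : {w : Fin 2 → ℝ | w 0 ^ 2 + w 1 ^ 2 < c} =
        (MeasurableEquiv.toLp 2 (Fin 2 → ℝ)).symm.symm ⁻¹'
          (Metric.ball (0 : EuclideanSpace ℝ (Fin 2)) (Real.sqrt c)) := by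
      ext w
      simp only [Set.mem_preimage, hball, mem_setOf_eq, Real.sq_sqrt hc.le, Fin.sum_univ_two]
      rfl
    rw [h2, ((EuclideanSpace.volume_preserving_symm_measurableEquiv_toLp (Fin 2)).symm).measure_preimage
      measurableSet_ball.nullMeasurableSet, EuclideanSpace.volume_ball]
    rw [Fintype.card_fin]
    rw [show ((2:ℕ):ℝ)/2 + 1 = 2 by norm_num, Real.Gamma_two]
    rw [← ENNReal.ofReal_pow hR, Real.sq_sqrt hc.le, ← ENNReal.ofReal_mul hc.le]
    congr 1
    rw [Real.sq_sqrt Real.pi_pos.le]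
    ring

lemma lens_vol (d r : ℝ) (hd : 0 < d) (hr : 0 < r) :
    volume (Metric.ball (0 : EuclideanSpace ℝ (Fin 3)) r ∩
        Metric.ball (d • EuclideanSpace.single 0 1) r) =
      ∫⁻ t : ℝ, ENNReal.ofReal (Real.pi * max 0 (r^2 - max (t^2) ((t-d)^2))) := by
  set S := Metric.ball (0 : EuclideanSpace ℝ (Fin 3)) r ∩
      Metric.ball (d • EuclideanSpace.single 0 1) r with hS
  have hSm : MeasurableSet S := (measurableSet_ball.inter measurableSet_ball)
  -- to pi coordinates
  have step1 : volume S = volume ((MeasurableEquiv.toLp 2 (Fin 3 → ℝ)) ⁻¹' S) :=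
    (((EuclideanSpace.volume_preserving_symm_measurableEquiv_toLp (Fin 3)).symm).measure_preimage
      hSm.nullMeasurableSet).symm
  have hT : (MeasurableEquiv.toLp 2 (Fin 3 → ℝ)) ⁻¹' S =
      {z : Fin 3 → ℝ | z 0^2 + (z 1^2 + z 2^2) < r^2 ∧ (z 0 - d)^2 + (z 1^2 + z 2^2) < r^2} := by
    ext z
    simp only [Set.mem_preimage, hS, Set.mem_inter_iff, mem_setOf_eq]
    constructor
    · rintro ⟨h1, h2⟩
      rw [mem_ball_zero_iff, EuclideanSpace.norm_eq, Real.sqrt_lt' hr] at h1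
      rw [Metric.mem_ball, dist_eq_norm, EuclideanSpace.norm_eq, Real.sqrt_lt' hr] at h2
      simp only [Fin.sum_univ_three, MeasurableEquiv.coe_toLp,
        PiLp.toLp_apply, EuclideanSpace.single_apply, PiLp.sub_apply,
        PiLp.smul_apply, smul_eq_mul] at h1 h2
      norm_num [show ¬((2:Fin 3) = 0) from by decide] at h1 h2
      constructor <;> [linarith; linarith]
    · rintro ⟨h1, h2⟩
      rw [mem_ball_zero_iff, EuclideanSpace.norm_eq, Real.sqrt_lt' hr]
      rw [Metric.mem_ball, dist_eq_norm, EuclideanSpace.norm_eq, Real.sqrt_lt' hr]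
      simp only [Fin.sum_univ_three, MeasurableEquiv.coe_toLp,
        PiLp.toLp_apply, EuclideanSpace.single_apply, PiLp.sub_apply,
        PiLp.smul_apply, smul_eq_mul]
      norm_num [show ¬((2:Fin 3) = 0) from by decide]
      constructor <;> [linarith; linarith]
  rw [step1, hT]
  -- to ℝ × (Fin 2 → ℝ)
  set T := {z : Fin 3 → ℝ | z 0^2 + (z 1^2 + z 2^2) < r^2 ∧ (z 0 - d)^2 + (z 1^2 + z 2^2) < r^2}
    with hTdef
  have hTm : MeasurableSet T :=
    MeasurableSet.inter
      (measurableSet_lt (g := fun _ => r^2)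
        (f := fun z : Fin 3 → ℝ => z 0^2 + (z 1^2 + z 2^2)) (by fun_prop) measurable_const)
      (measurableSet_lt (g := fun _ => r^2)
        (f := fun z : Fin 3 → ℝ => (z 0 - d)^2 + (z 1^2 + z 2^2)) (by fun_prop) measurable_const)
  have step2 : volume T =
      (volume.prod volume) ((MeasurableEquiv.piFinSuccAbove (fun _ : Fin 3 => ℝ) 0).symm ⁻¹' T) :=
    (((volume_preserving_piFinSuccAbove (fun _ : Fin 3 => ℝ) 0).symm).measure_preimage
      hTm.nullMeasurableSet).symm
  have hU : (MeasurableEquiv.piFinSuccAbove (fun _ : Fin 3 => ℝ) 0).symm ⁻¹' T =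
      {p : ℝ × (Fin 2 → ℝ) | p.2 0^2 + p.2 1^2 < r^2 - max (p.1^2) ((p.1-d)^2)} := by
    ext ⟨t, w⟩
    have c0 : ((MeasurableEquiv.piFinSuccAbove (fun _ : Fin 3 => ℝ) 0).symm (t, w)) 0 = t := by
      simp [MeasurableEquiv.piFinSuccAbove]
    have c1 : ((MeasurableEquiv.piFinSuccAbove (fun _ : Fin 3 => ℝ) 0).symm (t, w)) 1 = w 0 := by
      (first | (simp [MeasurableEquiv.piFinSuccAbove]; rfl) | simp [MeasurableEquiv.piFinSuccAbove])
    have c2 : ((MeasurableEquiv.piFinSuccAbove (fun _ : Fin 3 => ℝ) 0).symm (t, w)) 2 = w 1 := by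
      (first | (simp [MeasurableEquiv.piFinSuccAbove]; rfl) | simp [MeasurableEquiv.piFinSuccAbove])
    simp only [Set.mem_preimage, hTdef, mem_setOf_eq, c0, c1, c2]
    rcases le_total (t^2) ((t-d)^2) with h | h
    · rw [max_eq_right h]
      constructor
      · rintro ⟨h1, h2⟩; linarith
      · intro h1; exact ⟨by linarith, by linarith⟩
    · rw [max_eq_left h]
      constructor
      · rintro ⟨h1, h2⟩; linarith
      · intro h1; exact ⟨by linarith, by linarith⟩
  rw [step2, hU]
  have hUm : MeasurableSet {p : ℝ × (Fin 2 → ℝ) | p.2 0^2 + p.2 1^2 < r^2 - max (p.1^2) ((p.1-d)^2)} :=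
    measurableSet_lt (by fun_prop) (by fun_prop)
  rw [Measure.prod_apply hUm]
  congr 1
  funext t
  have : (Prod.mk t ⁻¹' {p : ℝ × (Fin 2 → ℝ) | p.2 0^2 + p.2 1^2 < r^2 - max (p.1^2) ((p.1-d)^2)}) =
      {w : Fin 2 → ℝ | w 0^2 + w 1^2 < r^2 - max (t^2) ((t-d)^2)} := rfl
  rw [this, vol_disk, ofReal_pi_max]

noncomputable def lens (d r : ℝ) : ℝ :=
  if d/2 < r then Real.pi * (4/3*r^3 - r^2*d + d^3/12) else 0

lemma lens_nonneg (d r : ℝ) (hd : 0 < d) : 0 ≤ lens d r := by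
  unfold lens
  split_ifs with h
  · have : 4/3*r^3 - r^2*d + d^3/12 = (2*r-d)^2*(4*r+d)/12 := by ring
    rw [this]
    have h1 : (0:ℝ) ≤ (2*r-d)^2 := sq_nonneg _
    have h2 : (0:ℝ) ≤ 4*r+d := by nlinarith
    positivity
  · exact le_refl 0

lemma hcs (d r : ℝ) (hd : 0 < d) (hr : 0 < r) :
    Integrable (fun t : ℝ => Real.pi * max 0 (r^2 - max (t^2) ((t-d)^2))) := by
  apply Continuous.integrable_of_hasCompactSupport (by fun_prop)
  apply HasCompactSupport.intro (isCompact_Icc (a := d - r) (b := r))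
  intro t ht
  simp only [Set.mem_Icc, not_and_or, not_le] at ht
  have hle : r^2 ≤ max (t^2) ((t-d)^2) := by
    rcases ht with h | h
    · nlinarith [le_max_right (t^2) ((t-d)^2)]
    · nlinarith [le_max_left (t^2) ((t-d)^2)]
  rw [max_eq_left (by linarith), mul_zero]

lemma lens_vol_closed (d r : ℝ) (hd : 0 < d) (hr : 0 < r) :
    volume (Metric.ball (0 : EuclideanSpace ℝ (Fin 3)) r ∩
        Metric.ball (d • EuclideanSpace.single 0 1) r) = ENNReal.ofReal (lens d r) := by
  rw [lens_vol d r hd hr,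
    ← MeasureTheory.ofReal_integral_eq_lintegral_ofReal (hcs d r hd hr)
      (Filter.Eventually.of_forall fun t => by positivity)]
  unfold lens
  split_ifs with h
  · rw [lens_integral d r hd h]
  · push_neg at h
    rw [MeasureTheory.integral_congr_ae
      (Filter.Eventually.of_forall fun t => slice_zero d r hd hr h t), integral_zero]

lemma vol_inter_eq (x y : EuclideanSpace ℝ (Fin 3)) (r : ℝ) :
    volume (Metric.ball x r ∩ Metric.ball y r) =
      volume (Metric.ball (0 : EuclideanSpace ℝ (Fin 3)) r ∩
        Metric.ball (‖x - y‖ • EuclideanSpace.single 0 1) r) := by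
  set d := ‖x - y‖ with hdd
  set u : EuclideanSpace ℝ (Fin 3) := EuclideanSpace.single 0 1 with hu
  set v := y - x with hv
  -- translation
  have htrans : (fun z : EuclideanSpace ℝ (Fin 3) => z + x) ⁻¹'
      (Metric.ball x r ∩ Metric.ball y r) = Metric.ball 0 r ∩ Metric.ball v r := by
    have key : ∀ z : EuclideanSpace ℝ (Fin 3), z + x - y = z - v := by
      intro z; rw [hv]; abel
    ext z
    simp only [Set.mem_preimage, Set.mem_inter_iff, Metric.mem_ball, dist_eq_norm,
      add_sub_cancel_right, key z, sub_zero]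
  have t1 : volume (Metric.ball x r ∩ Metric.ball y r) =
      volume (Metric.ball 0 r ∩ Metric.ball v r) := by
    rw [← htrans, measure_preimage_add_right]
  rw [t1]
  -- rotation
  have hnu : ‖u‖ = 1 := EuclideanSpace.norm_single 0 1 |>.trans (by norm_num)
  have hnv : ‖v‖ = d := by rw [hv, hdd, norm_sub_rev]
  have hnw : ‖d • u‖ = d := by
    rw [norm_smul, hnu, mul_one, Real.norm_eq_abs, abs_of_nonneg (norm_nonneg _)]
  have hvw : ‖v‖ = ‖d • u‖ := by rw [hnv, hnw]
  set e := Submodule.reflection (ℝ ∙ (v - d • u))ᗮ with he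
  have hev : e v = d • u := Submodule.reflection_sub hvw
  have hp : (⇑e) ⁻¹' (Metric.ball 0 r ∩ Metric.ball (d • u) r) =
      Metric.ball 0 r ∩ Metric.ball v r := by
    ext z
    simp only [Set.mem_preimage, Set.mem_inter_iff, mem_ball_zero_iff, Metric.mem_ball,
      dist_eq_norm, sub_zero]
    rw [e.norm_map z, ← hev, ← map_sub, e.norm_map]
  rw [← hp, e.measurePreserving.measure_preimage
    (measurableSet_ball.inter measurableSet_ball).nullMeasurableSet]


/-- **Fefferman–de la Llave representation of the Coulomb kernel.**
For all `x ≠ y` in `ℝ³`,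
`1/|x − y| = (1/π) ∫₀^∞ r⁻⁵ vol(B(x,r) ∩ B(y,r)) dr`. -/
theorem fefferman_de_la_llave (x y : EuclideanSpace ℝ (Fin 3)) (hxy : x ≠ y) :
    ‖x - y‖⁻¹ = (1 / Real.pi) *
      ∫ r in Set.Ioi (0 : ℝ),
        (volume (Metric.ball x r ∩ Metric.ball y r)).toReal / r ^ 5 := by
  set d := ‖x - y‖ with hdd
  have hd : 0 < d := by
    rw [hdd, norm_pos_iff]
    exact sub_ne_zero_of_ne hxy
  set L : ℝ → ℝ := fun r => lens d r / r^5 with hL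
  have hcong1 : ∫ r in Set.Ioi (0 : ℝ),
      (volume (Metric.ball x r ∩ Metric.ball y r)).toReal / r ^ 5 =
      ∫ r in Set.Ioi (0 : ℝ), L r := by
    apply MeasureTheory.setIntegral_congr_fun measurableSet_Ioi
    intro r hr
    rw [hL]
    dsimp only
    rw [vol_inter_eq x y r, lens_vol_closed d r hd hr, ENNReal.toReal_ofReal (lens_nonneg d r hd)]
  rw [hcong1]
  set P : ℝ → ℝ := fun r => Real.pi * (4/3*r^3 - r^2*d + d^3/12) / r^5 with hP
  set F : ℝ → ℝ := fun t => Real.pi * (-4/3 * t⁻¹ + d/2 * t⁻¹^2 - d^3/48 * t⁻¹^4) with hF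
  have hderiv : ∀ t ∈ Set.Ici (d/2), HasDerivAt F (P t) t := by
    intro t ht
    have ht0 : t ≠ 0 := by
      have : (0:ℝ) < d/2 := by linarith
      intro h; rw [h] at ht; simp only [Set.mem_Ici] at ht; linarith
    have h1 := hasDerivAt_inv ht0
    have h2 := h1.pow 2
    have h4 := h1.pow 4
    have combo := (((h1.const_mul (-4/3 : ℝ)).add (h2.const_mul (d/2))).sub
      (h4.const_mul (d^3/48))).const_mul Real.pi
    convert! combo using 1
    rw [hP]
    dsimp only
    norm_num
    field_simp
    ring
  have hpos : ∀ t ∈ Set.Ioi (d/2), 0 ≤ P t := by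
    intro t ht
    simp only [Set.mem_Ioi] at ht
    rw [hP]
    dsimp only
    have heq : 4/3*t^3 - t^2*d + d^3/12 = (2*t-d)^2*(4*t+d)/12 := by ring
    rw [heq]
    have ht0 : 0 < t := by linarith
    have h2 : (0:ℝ) ≤ (2*t-d)^2*(4*t+d)/12 := by positivity
    positivity
  have htend : Filter.Tendsto F Filter.atTop (nhds 0) := by
    have l1 := tendsto_inv_atTop_zero (𝕜 := ℝ)
    have := (((l1.const_mul (-4/3 : ℝ)).add ((l1.pow 2).const_mul (d/2))).sub
      ((l1.pow 4).const_mul (d^3/48))).const_mul Real.pi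
    rw [hF]
    convert this using 2
    norm_num
  have hintP : IntegrableOn P (Set.Ioi (d/2)) volume :=
    integrableOn_Ioi_deriv_of_nonneg' hderiv hpos htend
  have hvalP : ∫ r in Set.Ioi (d/2), P r = Real.pi / d := by
    rw [integral_Ioi_of_hasDerivAt_of_nonneg' hderiv hpos htend]
    rw [hF]
    dsimp only
    field_simp
    ring
  have hzero : Set.EqOn L 0 (Set.Ioc 0 (d/2)) := by
    intro r hr
    rw [hL]
    dsimp only
    rw [show lens d r = 0 from if_neg (by push_neg; exact hr.2)]
    simp
  have hEq2 : Set.EqOn L P (Set.Ioi (d/2)) := by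
    intro r hr
    rw [hL, hP]
    dsimp only
    rw [show lens d r = Real.pi * (4/3*r^3 - r^2*d + d^3/12) from if_pos hr]
  have hsplitset : Set.Ioc (0:ℝ) (d/2) ∪ Set.Ioi (d/2) = Set.Ioi 0 :=
    Set.Ioc_union_Ioi_eq_Ioi (by linarith)
  have hint1 : IntegrableOn L (Set.Ioc 0 (d/2)) volume :=
    (integrableOn_zero).congr_fun (fun r hr => (hzero hr).symm) measurableSet_Ioc
  have hint2 : IntegrableOn L (Set.Ioi (d/2)) volume :=
    hintP.congr_fun (fun r hr => (hEq2 hr).symm) measurableSet_Ioi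
  have hsplit : ∫ r in Set.Ioi (0:ℝ), L r =
      (∫ r in Set.Ioc (0:ℝ) (d/2), L r) + ∫ r in Set.Ioi (d/2), L r := by
    rw [← hsplitset, MeasureTheory.setIntegral_union
      (Set.Ioc_disjoint_Ioi le_rfl) measurableSet_Ioi hint1 hint2]
  have hv1 : ∫ r in Set.Ioc (0:ℝ) (d/2), L r = 0 := by
    rw [MeasureTheory.setIntegral_congr_fun measurableSet_Ioc hzero]
    simp
  have hv2 : ∫ r in Set.Ioi (d/2), L r = Real.pi / d := by
    rw [MeasureTheory.setIntegral_congr_fun measurableSet_Ioi hEq2, hvalP]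
  rw [hsplit, hv1, hv2, zero_add]
  have hpi : Real.pi ≠ 0 := Real.pi_ne_zero
  field_simp
end
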